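/- arXiv:math/0505415 — 6 statements merged into one kernel-verified Lean document; each statement's English description precedes it below -/
import Mathlib

section
/- Fix integers k ≥ 0 and d ≥ 2k-1. For each n ≥ k+1, let f(n) be the minimum, over all n-vertex graphs G of treewidth exactly k, of the number of vertices of G with degree at most d. Then f(n)/n converges to (d-2k+1)/(d-k+1) as n → ∞. -/
/-- The degree of a vertex `v` in `G` (number of neighbours). -/
noncomputable def degN {V : Type*} (G : SimpleGraph V) (v : V) : ℕ :=
  (G.neighborSet v).ncard

/-- `G` is a `k`-tree. This encodes the recursive definition (start with a `(k+1)`-clique and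
repeatedly add a new vertex adjacent to exactly the vertices of an existing `k`-clique) via a
construction ordering `e : V ≃ Fin n`: the first `k+1` vertices form a clique, and every later
vertex is adjacent among the earlier vertices to exactly the `k` vertices of a clique `S`. -/
def IsKTree {V : Type*} (k : ℕ) (G : SimpleGraph V) : Prop :=
  ∃ (n : ℕ) (e : V ≃ Fin n),
    k + 1 ≤ n ∧
    (∀ i j : Fin n, i < j → (j : ℕ) < k + 1 → G.Adj (e.symm i) (e.symm j)) ∧
    (∀ j : Fin n, k + 1 ≤ (j : ℕ) →
      ∃ S : Finset (Fin n), S.card = k ∧ (∀ i ∈ S, i < j) ∧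
        (∀ i : Fin n, i < j → (G.Adj (e.symm i) (e.symm j) ↔ i ∈ S)) ∧
        (∀ i ∈ S, ∀ i' ∈ S, i ≠ i' → G.Adj (e.symm i) (e.symm i')))

/-- The treewidth of a graph `G`: the minimum `k` such that `G` is a spanning subgraph
of a `k`-tree. -/
noncomputable def treewidth {V : Type*} (G : SimpleGraph V) : ℕ :=
  sInf {k : ℕ | ∃ H : SimpleGraph V, IsKTree k H ∧ G ≤ H}

open Finset
open scoped Classical

lemma card_filter_val_mem (n : ℕ) (T : Finset ℕ) (hT : ∀ x ∈ T, x < n) :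
    (Finset.univ.filter (fun i : Fin n => (i : ℕ) ∈ T)).card = T.card := by
  rw [← Finset.card_attachFin T hT]
  apply congrArg
  ext i
  simp [Finset.mem_attachFin]

lemma degN_eq_card (n : ℕ) (G : SimpleGraph (Fin n)) (v : Fin n) :
    degN G v = (Finset.univ.filter (fun w => G.Adj v w)).card := by
  rw [degN, Set.ncard_eq_toFinset_card']
  congr 1
  ext w
  simp [SimpleGraph.neighborSet]
  exact Set.mem_toFinset

lemma degN_mono (n : ℕ) (G H : SimpleGraph (Fin n)) (h : G ≤ H) (v : Fin n) :
    degN G v ≤ degN H v := by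
  rw [degN_eq_card, degN_eq_card]
  apply Finset.card_le_card
  intro w hw
  simp only [Finset.mem_filter, Finset.mem_univ, true_and] at *
  exact h hw

lemma card_filter_equiv {α β : Type*} [Fintype α] [Fintype β] (e : α ≃ β) (P : β → Prop) :
    (Finset.univ.filter (fun a => P (e a))).card = (Finset.univ.filter P).card := by
  apply Finset.card_equiv e
  intro i
  simp

lemma tw_lower {n k d : ℕ} (G H : SimpleGraph (Fin n)) (hGH : G ≤ H) (hH : IsKTree k H) :
    (d + 1 - k) * (Finset.univ.filter (fun v => d + 1 ≤ degN G v)).card ≤ k * n := by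
  obtain ⟨N, e, hN, hcl, hS⟩ := hH
  have hNn : N = n := by
    have := Fintype.card_congr e
    simpa using this.symm
  subst hNn
  set A : Fin N → Fin N → Prop := fun i j => H.Adj (e.symm i) (e.symm j) with hA
  set back : Fin N → ℕ := fun j => (Finset.univ.filter (fun i => A j i ∧ i < j)).card with hbackdef
  set fwd : Fin N → ℕ := fun j => (Finset.univ.filter (fun i => A j i ∧ j < i)).card with hfwddef
  -- back degree bounded by k
  have hback : ∀ j, back j ≤ k := by
    intro j
    by_cases hj : (j : ℕ) < k + 1
    · calc back j ≤ (Finset.univ.filter (fun i : Fin N => (i : ℕ) ∈ Finset.range j)).card := by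
            apply Finset.card_le_card
            intro i hi
            simp only [Finset.mem_filter, Finset.mem_univ, true_and, Finset.mem_range] at *
            exact hi.2
        _ = (j : ℕ) := by
            rw [card_filter_val_mem]
            · exact Finset.card_range _
            · intro x hx
              simp only [Finset.mem_range] at hx
              exact hx.trans j.isLt
        _ ≤ k := by omega
    · push_neg at hj
      obtain ⟨S, hScard, hSlt, hSiff, hScl⟩ := hS j hj
      have : Finset.univ.filter (fun i => A j i ∧ i < j) = S := by
        ext i
        simp only [Finset.mem_filter, Finset.mem_univ, true_and]
        constructor
        · rintro ⟨ha, hlt⟩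
          exact (hSiff i hlt).mp ((H.adj_symm ha))
        · intro hi
          exact ⟨H.adj_symm ((hSiff i (hSlt i hi)).mpr hi), hSlt i hi⟩
      rw [hbackdef]
      simp only []
      rw [this, hScard]
  -- sum of back = sum of fwd
  have hsum : ∑ j : Fin N, back j = ∑ j : Fin N, fwd j := by
    simp only [hbackdef, hfwddef, Finset.card_filter]
    rw [Finset.sum_comm]
    apply Finset.sum_congr rfl
    intro i _
    apply Finset.sum_congr rfl
    intro j _
    congr 1
    simp only [eq_iff_iff]
    constructor
    · rintro ⟨h1, h2⟩; exact ⟨H.adj_symm h1, h2⟩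
    · rintro ⟨h1, h2⟩; exact ⟨H.adj_symm h1, h2⟩
  -- degree decomposition
  have hdeg : ∀ j, degN H (e.symm j) = back j + fwd j := by
    intro j
    rw [degN_eq_card]
    rw [← card_filter_equiv e.symm (fun w => H.Adj (e.symm j) w)]
    rw [hbackdef, hfwddef]
    simp only []
    rw [← Finset.card_union_of_disjoint]
    · apply congrArg
      ext i
      simp only [Finset.mem_union, Finset.mem_filter, Finset.mem_univ, true_and]
      constructor
      · intro h
        rcases lt_trichotomy i j with h1 | h1 | h1
        · exact Or.inl ⟨h, h1⟩
        · exfalso; subst h1; exact H.irrefl h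
        · exact Or.inr ⟨h, h1⟩
      · rintro (⟨h, _⟩ | ⟨h, _⟩) <;> exact h
    · rw [Finset.disjoint_filter]
      rintro i _ ⟨_, h1⟩ ⟨_, h2⟩
      exact absurd h2 (not_lt.mpr h1.le)
  have hsumback : ∑ j : Fin N, back j ≤ k * N := by
    calc ∑ j : Fin N, back j ≤ ∑ _j : Fin N, k := Finset.sum_le_sum (fun j _ => hback j)
      _ = k * N := by simp [mul_comm]
  set HD : Finset (Fin N) := Finset.univ.filter (fun j => d + 1 ≤ degN G (e.symm j)) with hHD
  have hfwdlow : ∀ j ∈ HD, d + 1 - k ≤ fwd j := by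
    intro j hj
    simp only [hHD, Finset.mem_filter, Finset.mem_univ, true_and] at hj
    have h1 : degN G (e.symm j) ≤ degN H (e.symm j) := degN_mono _ G H hGH _
    have h2 := hdeg j
    have h3 := hback j
    omega
  have hkey : (d + 1 - k) * HD.card ≤ k * N := by
    calc (d + 1 - k) * HD.card = ∑ _j ∈ HD, (d + 1 - k) := by simp [mul_comm]
      _ ≤ ∑ j ∈ HD, fwd j := Finset.sum_le_sum hfwdlow
      _ ≤ ∑ j : Fin N, fwd j := Finset.sum_le_sum_of_subset (Finset.subset_univ _)
      _ = ∑ j : Fin N, back j := hsum.symm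
      _ ≤ k * N := hsumback
  have hcard : HD.card = (Finset.univ.filter (fun v => d + 1 ≤ degN G v)).card := by
    apply Finset.card_equiv e.symm
    intro i
    simp [hHD]
  rw [← hcard]
  exact hkey

lemma div_eq_of_between {s g x : ℕ} (hs : 0 < s) (h1 : s * g ≤ x) (h2 : x < s * g + s) :
    x / s = g := by
  apply le_antisymm
  · apply Nat.le_of_lt_succ
    rw [Nat.div_lt_iff_lt_mul hs]
    calc x < s * g + s := h2
      _ = (g + 1) * s := by ring
  · rw [Nat.le_div_iff_mul_le hs]
    calc g * s = s * g := by ring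
      _ ≤ x := h1

/-- `k`-trees have no clique of size `k+2`. -/
lemma ktree_clique_bound {n k : ℕ} {H : SimpleGraph (Fin n)} (hH : IsKTree k H)
    (T : Finset (Fin n)) (hT : ∀ a ∈ T, ∀ b ∈ T, a ≠ b → H.Adj a b) : T.card ≤ k + 1 := by
  obtain ⟨N, e, hN, hcl, hS⟩ := hH
  set T' : Finset (Fin N) := T.image e with hT'
  have hTcard : T'.card = T.card := Finset.card_image_of_injective _ e.injective
  have hT'adj : ∀ a ∈ T', ∀ b ∈ T', a ≠ b → H.Adj (e.symm a) (e.symm b) := by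
    intro a ha b hb hab
    simp only [hT', Finset.mem_image] at ha hb
    obtain ⟨a', ha', rfl⟩ := ha
    obtain ⟨b', hb', rfl⟩ := hb
    simp only [Equiv.symm_apply_apply]
    apply hT a' ha' b' hb'
    intro hc; exact hab (by rw [hc])
  rw [← hTcard]
  rcases Finset.eq_empty_or_nonempty T' with h | h
  · simp [h]
  set j := T'.max' h with hj
  have hjmem : j ∈ T' := T'.max'_mem h
  by_cases hjk : k + 1 ≤ (j : ℕ)
  · obtain ⟨S, hScard, hSlt, hSiff, _⟩ := hS j hjk
    have hsub : T'.erase j ⊆ S := by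
      intro i hi
      have hine : i ≠ j := Finset.ne_of_mem_erase hi
      have himem : i ∈ T' := Finset.mem_of_mem_erase hi
      have hilt : i < j := lt_of_le_of_ne (T'.le_max' i himem) hine
      exact (hSiff i hilt).mp (hT'adj i himem j hjmem hine)
    have := Finset.card_le_card hsub
    rw [hScard] at this
    have := Finset.card_erase_of_mem hjmem
    omega
  · push_neg at hjk
    have hsub : T' ⊆ Finset.univ.filter (fun i : Fin N => (i : ℕ) ∈ Finset.range (k + 1)) := by
      intro i hi
      simp only [Finset.mem_filter, Finset.mem_univ, true_and, Finset.mem_range]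
      have := T'.le_max' i hi
      have : (i : ℕ) ≤ (j : ℕ) := this
      omega
    have := Finset.card_le_card hsub
    rw [card_filter_val_mem] at this
    · simpa using this
    · intro x hx
      simp only [Finset.mem_range] at hx
      have : (j : ℕ) < N := j.isLt
      omega

/-- The parent relation of the extremal construction. -/
def nbr (k s m : ℕ) (i j : ℕ) : Prop :=
  (j < m ∧ i < j ∧ j ≤ i + k) ∨
  (m ≤ j ∧ i < m ∧ k * ((j - m) / s) ≤ i ∧ i < k * ((j - m) / s) + k)

lemma nbr_lt {k s m i j : ℕ} (h : nbr k s m i j) : i < j := by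
  rcases h with ⟨_, h, _⟩ | ⟨h1, h2, _⟩ <;> omega

/-- The extremal construction. -/
def cg (k s m n : ℕ) : SimpleGraph (Fin n) :=
  SimpleGraph.fromRel (fun i j => nbr k s m (i : ℕ) (j : ℕ))

lemma cg_adj {k s m n : ℕ} {i j : Fin n} (hij : (i : ℕ) < (j : ℕ)) :
    (cg k s m n).Adj i j ↔ nbr k s m (i : ℕ) (j : ℕ) := by
  simp only [cg, SimpleGraph.fromRel_adj]
  constructor
  · rintro ⟨hne, h | h⟩
    · exact h
    · exact absurd (nbr_lt h) (by omega)
  · intro h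
    exact ⟨by intro hc; rw [hc] at hij; omega, Or.inl h⟩

section Construction

variable {k s B r m n : ℕ}

lemma nbr_parents_clique (hm : m = k * B + r) (hn : n = m + s * B)
    {a b j : ℕ} (ha : nbr k s m a j) (hb : nbr k s m b j) (hab : a < b) (hjn : j < n) :
    nbr k s m a b := by
  rcases ha with ⟨h1, h2, h3⟩ | ⟨h1, h2, h3, h4⟩
  · rcases hb with ⟨g1, g2, g3⟩ | ⟨g1, g2, g3, g4⟩
    · left; omega
    · omega
  · rcases hb with ⟨g1, g2, g3⟩ | ⟨g1, g2, g3, g4⟩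
    · omega
    · left; omega

lemma leaf_group_lt (hm : m = k * B + r) (hn : n = m + s * B)
    {j : ℕ} (h1 : m ≤ j) (hjn : j < n) : (j - m) / s < B := by
  have hs : 0 < s := by
    rcases Nat.eq_zero_or_pos s with h | h
    · subst h; omega
    · exact h
  apply Nat.div_lt_of_lt_mul
  omega

lemma cg_isKTree (hm : m = k * B + r) (hn : n = m + s * B) (hB : 2 ≤ B) (hp : 1 ≤ k + s) :
    IsKTree k (cg k s m n) := by
  refine ⟨n, Equiv.refl (Fin n), by nlinarith, ?_, ?_⟩
  · intro i j hij hjk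
    simp only [Equiv.refl_symm, Equiv.refl_apply]
    have hij' : (i : ℕ) < (j : ℕ) := hij
    rw [cg_adj hij']
    have hk1 : 1 ≤ k := by omega
    left
    refine ⟨by nlinarith, hij', by omega⟩
  · intro j hjk
    refine ⟨Finset.univ.filter (fun i : Fin n => nbr k s m (i : ℕ) (j : ℕ)), ?_, ?_, ?_, ?_⟩
    · -- cardinality k
      by_cases hjm : (j : ℕ) < m
      · have : ∀ i : Fin n, (nbr k s m (i : ℕ) (j : ℕ) ↔ (i : ℕ) ∈ Finset.Ico ((j : ℕ) - k) (j : ℕ)) := by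
          intro i
          simp only [Finset.mem_Ico]
          constructor
          · rintro (⟨h1, h2, h3⟩ | ⟨h1, h2, h3, h4⟩) <;> omega
          · intro h; left; omega
        rw [Finset.filter_congr (fun i _ => this i), card_filter_val_mem]
        · rw [Nat.card_Ico]; omega
        · intro x hx
          simp only [Finset.mem_Ico] at hx
          have : (j : ℕ) < n := j.isLt
          omega
      · push_neg at hjm
        set g := ((j : ℕ) - m) / s with hg
        have hgB : g < B := leaf_group_lt hm hn hjm j.isLt
        have hkg : k * g + k ≤ m := by nlinarith
        have : ∀ i : Fin n, (nbr k s m (i : ℕ) (j : ℕ) ↔ (i : ℕ) ∈ Finset.Ico (k * g) (k * g + k)) := by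
          intro i
          simp only [Finset.mem_Ico]
          constructor
          · rintro (⟨h1, h2, h3⟩ | ⟨h1, h2, h3, h4⟩) <;> simp only [← hg] at * <;> omega
          · intro h; right; simp only [← hg]; omega
        rw [Finset.filter_congr (fun i _ => this i), card_filter_val_mem]
        · rw [Nat.card_Ico]; omega
        · intro x hx
          simp only [Finset.mem_Ico] at hx
          omega
    · -- parents earlier
      intro i hi
      simp only [Finset.mem_filter, Finset.mem_univ, true_and] at hi
      exact nbr_lt hi
    · -- adjacency iff
      intro i hij
      simp only [Equiv.refl_symm, Equiv.refl_apply, Finset.mem_filter, Finset.mem_univ, true_and]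
      exact cg_adj hij
    · -- parents form a clique
      intro i hi i' hi' hne
      simp only [Finset.mem_filter, Finset.mem_univ, true_and] at hi hi'
      simp only [Equiv.refl_symm, Equiv.refl_apply]
      rcases lt_trichotomy (i : ℕ) (i' : ℕ) with h | h | h
      · rw [cg_adj h]
        exact nbr_parents_clique hm hn hi hi' h j.isLt
      · exact absurd (Fin.ext h) hne
      · exact ((cg k s m n).adj_symm (by
          rw [cg_adj h]
          exact nbr_parents_clique hm hn hi' hi h j.isLt))

end Construction

section Construction

variable {k s B r m n : ℕ}

lemma cg_treewidth (hm : m = k * B + r) (hn : n = m + s * B) (hB : 2 ≤ B) (hp : 1 ≤ k + s) :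
    treewidth (cg k s m n) = k := by
  have hkt := cg_isKTree hm hn hB hp
  have hmem : k ∈ {k' : ℕ | ∃ H : SimpleGraph (Fin n), IsKTree k' H ∧ cg k s m n ≤ H} :=
    ⟨cg k s m n, hkt, le_refl _⟩
  apply le_antisymm
  · exact Nat.sInf_le hmem
  · apply le_csInf ⟨k, hmem⟩
    rintro k' ⟨H, hH, hle⟩
    by_contra hlt
    push_neg at hlt
    have hk1 : 1 ≤ k := by omega
    set T : Finset (Fin n) := Finset.univ.filter (fun i : Fin n => (i : ℕ) ∈ Finset.range (k + 1))
      with hT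
    have hTcard : T.card = k + 1 := by
      rw [hT, card_filter_val_mem]
      · exact Finset.card_range _
      · intro x hx
        simp only [Finset.mem_range] at hx
        nlinarith
    have hadj : ∀ a ∈ T, ∀ b ∈ T, a ≠ b → H.Adj a b := by
      intro a ha b hb hab
      simp only [hT, Finset.mem_filter, Finset.mem_univ, true_and, Finset.mem_range] at ha hb
      have hmain : ∀ x y : Fin n, (x : ℕ) < (y : ℕ) → (y : ℕ) < k + 1 → H.Adj x y := by
        intro x y hxy hyk
        apply hle
        rw [cg_adj hxy]
        left
        refine ⟨by nlinarith, hxy, by omega⟩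
      rcases lt_trichotomy (a : ℕ) (b : ℕ) with h | h | h
      · exact hmain a b h hb
      · exact absurd (Fin.ext h) hab
      · exact H.adj_symm (hmain b a h ha)
    have := ktree_clique_bound hH T hadj
    omega

/-- every "interior" vertex has degree at least 2k+s. -/
lemma cg_deg_interior (hm : m = k * B + r) (hn : n = m + s * B)
    (v : Fin n) (hv1 : k ≤ (v : ℕ)) (hv2 : (v : ℕ) + k < k * B) :
    2 * k + s ≤ degN (cg k s m n) v := by
  have hk1 : 1 ≤ k := by
    by_contra h
    push_neg at h
    interval_cases k <;> omega
  have hvm : (v : ℕ) + k < m := by omega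
  set g := (v : ℕ) / k with hg
  have hgv1 : k * g ≤ (v : ℕ) := Nat.mul_div_le _ _
  have hgv2 : (v : ℕ) < k * g + k := by
    have h1 := Nat.div_add_mod (v : ℕ) k
    have h2 := Nat.mod_lt (v : ℕ) (show 0 < k by omega)
    rw [← hg] at h1
    omega
  have hgB : g + 1 ≤ B := by
    by_contra h
    push_neg at h
    have : B ≤ g := by omega
    have : k * B ≤ k * g := Nat.mul_le_mul_left k this
    omega
  set T : Finset ℕ :=
    (Finset.Ico ((v : ℕ) - k) (v : ℕ) ∪ Finset.Ioc (v : ℕ) ((v : ℕ) + k)) ∪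
      Finset.Ico (m + s * g) (m + s * g + s) with hTdef
  have hTbound : ∀ x ∈ T, x < n := by
    intro x hx
    simp only [hTdef, Finset.mem_union, Finset.mem_Ico, Finset.mem_Ioc] at hx
    have hsB : s * g + s ≤ s * B := by
      calc s * g + s = s * (g + 1) := by ring
        _ ≤ s * B := Nat.mul_le_mul_left s hgB
    rcases hx with (h | h) | h <;> omega
  have hTcard : T.card = 2 * k + s := by
    rw [hTdef]
    rw [Finset.card_union_of_disjoint, Finset.card_union_of_disjoint]
    · rw [Nat.card_Ico, Nat.card_Ioc, Nat.card_Ico]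
      omega
    · rw [Finset.disjoint_left]
      intro x hx hy
      simp only [Finset.mem_Ico, Finset.mem_Ioc] at hx hy
      omega
    · rw [Finset.disjoint_left]
      intro x hx hy
      simp only [Finset.mem_union, Finset.mem_Ico, Finset.mem_Ioc] at hx hy
      rcases hx with h | h <;> omega
  have hadj : ∀ w : Fin n, (w : ℕ) ∈ T → (cg k s m n).Adj v w := by
    intro w hw
    simp only [hTdef, Finset.mem_union, Finset.mem_Ico, Finset.mem_Ioc] at hw
    rcases hw with (h | h) | h
    · -- w < v, back path neighbour
      apply (cg k s m n).adj_symm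
      have hwv : (w : ℕ) < (v : ℕ) := h.2
      rw [cg_adj hwv]
      left
      omega
    · -- forward path neighbour
      have hvw : (v : ℕ) < (w : ℕ) := h.1
      rw [cg_adj hvw]
      left
      omega
    · -- leaf neighbour
      have hs : 0 < s := by
        rcases Nat.eq_zero_or_pos s with h0 | h0
        · omega
        · exact h0
      have hvw : (v : ℕ) < (w : ℕ) := by omega
      rw [cg_adj hvw]
      right
      have hdiv : ((w : ℕ) - m) / s = g := by
        apply div_eq_of_between hs <;> omega
      rw [hdiv]
      omega
  rw [degN_eq_card, ← hTcard, ← card_filter_val_mem n T hTbound]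
  apply Finset.card_le_card
  intro w hw
  simp only [Finset.mem_filter, Finset.mem_univ, true_and] at *
  exact hadj w hw

lemma cg_low_count (hm : m = k * B + r) (hn : n = m + s * B) (hB : 2 ≤ B) {d : ℕ}
    (hd : 2 * k + s = d + 1) :
    (Finset.univ.filter (fun v : Fin n => degN (cg k s m n) v ≤ d)).card ≤ s * B + r + 2 * k := by
  classical
  have hsub : Finset.univ.filter (fun v : Fin n => degN (cg k s m n) v ≤ d) ⊆
      Finset.univ.filter (fun v : Fin n => ¬ ((v : ℕ) ∈ Finset.Ico k (k * B - k))) := by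
    intro v hv
    simp only [Finset.mem_filter, Finset.mem_univ, true_and, Finset.mem_Ico] at *
    intro hc
    have h2 : (v : ℕ) + k < k * B := by omega
    have := cg_deg_interior hm hn v hc.1 h2
    omega
  have h1 := Finset.card_le_card hsub
  have h2 : (Finset.univ.filter (fun v : Fin n => ((v : ℕ) ∈ Finset.Ico k (k * B - k)))).card
      = k * B - k - k := by
    rw [card_filter_val_mem]
    · rw [Nat.card_Ico]
    · intro x hx
      simp only [Finset.mem_Ico] at hx
      omega
  have h3 := Finset.card_filter_add_card_filter_not
    (s := (Finset.univ : Finset (Fin n))) (p := fun v : Fin n => ((v : ℕ) ∈ Finset.Ico k (k * B - k)))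
  have h4 : (Finset.univ : Finset (Fin n)).card = n := by simp
  omega

end Construction

lemma complete_isKTree (n : ℕ) (hn : 1 ≤ n) : IsKTree (n - 1) (⊤ : SimpleGraph (Fin n)) := by
  refine ⟨n, Equiv.refl (Fin n), by omega, ?_, ?_⟩
  · intro i j hij _
    simp only [Equiv.refl_symm, Equiv.refl_apply, SimpleGraph.top_adj]
    intro hc
    rw [hc] at hij
    exact lt_irrefl _ hij
  · intro j hj
    exfalso
    have := j.isLt
    omega

lemma exists_ktree_of_tw {n : ℕ} (hn : 1 ≤ n) (G : SimpleGraph (Fin n)) :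
    ∃ H : SimpleGraph (Fin n), IsKTree (treewidth G) H ∧ G ≤ H := by
  have hne : {k' : ℕ | ∃ H : SimpleGraph (Fin n), IsKTree k' H ∧ G ≤ H}.Nonempty :=
    ⟨n - 1, ⊤, complete_isKTree n hn, le_top⟩
  exact Nat.sInf_mem hne

lemma ncard_setOf_eq_card_filter (n : ℕ) (P : Fin n → Prop) :
    {v : Fin n | P v}.ncard = (Finset.univ.filter P).card := by
  rw [Set.ncard_eq_toFinset_card']
  congr 1
  ext w
  simp


/-- For integers `k ≥ 0` and `d ≥ 2k-1`, letting `f n` be the minimum over all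
`n`-vertex graphs `G` of treewidth exactly `k` of the number of vertices of `G` of degree at
most `d`, the sequence `f n / n` converges to `(d-2k+1)/(d-k+1)`. -/
theorem stmt1 (k d : ℕ) (hd : 2 * k ≤ d + 1) :
    Filter.Tendsto
      (fun n : ℕ =>
        ((sInf {m : ℕ | ∃ G : SimpleGraph (Fin n),
            treewidth G = k ∧ {v : Fin n | degN G v ≤ d}.ncard = m} : ℕ) : ℝ) / n)
      Filter.atTop
      (nhds (((d : ℝ) - 2 * k + 1) / ((d : ℝ) - k + 1))) := by
  set s : ℕ := d + 1 - 2 * k with hs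
  set P : ℕ := k + s with hP
  have hkd : k ≤ d := by omega
  have hp1 : 1 ≤ P := by omega
  set f : ℕ → ℕ := fun n => sInf {m : ℕ | ∃ G : SimpleGraph (Fin n),
      treewidth G = k ∧ {v : Fin n | degN G v ≤ d}.ncard = m} with hf
  -- lower bound for every member of the set
  have claimA : ∀ n : ℕ, 1 ≤ n → ∀ mv ∈ {m : ℕ | ∃ G : SimpleGraph (Fin n),
      treewidth G = k ∧ {v : Fin n | degN G v ≤ d}.ncard = m}, s * n ≤ P * mv := by
    intro n hn mv hmv
    obtain ⟨G, htw, hcard⟩ := hmv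
    obtain ⟨H, hH, hGH⟩ := exists_ktree_of_tw hn G
    rw [htw] at hH
    have hlow := tw_lower (d := d) G H hGH hH
    set a := (Finset.univ.filter (fun v => d + 1 ≤ degN G v)).card with ha
    have hmv' : mv = (Finset.univ.filter (fun v : Fin n => degN G v ≤ d)).card := by
      rw [← hcard, ncard_setOf_eq_card_filter]
      convert rfl
    have hsplit : a + mv = n := by
      rw [hmv', ha]
      have hcongr : (Finset.univ.filter (fun v => d + 1 ≤ degN G v)) =
          (Finset.univ.filter (fun v : Fin n => ¬ (degN G v ≤ d))) := by
        apply Finset.filter_congr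
        intro v _
        simp only [not_le, eq_iff_iff]
        omega
      rw [hcongr, add_comm]
      have := Finset.card_filter_add_card_filter_not
        (s := (Finset.univ : Finset (Fin n))) (p := fun v : Fin n => degN G v ≤ d)
      simpa using this
    have hPd : P = d + 1 - k := by omega
    rw [← hPd] at hlow
    have e1 : P * a + P * mv = k * n + s * n := by
      rw [← Nat.mul_add, hsplit, hP]
      ring
    linarith
  -- upper bound: construction
  have claimB : ∀ n : ℕ, 2 * P ≤ n → f n ≤ s * (n / P) + 3 * P := by
    intro n hn
    set B := n / P with hB
    set r := n % P with hr
    have hBr : P * B + r = n := Nat.div_add_mod n P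
    have hB2 : 2 ≤ B := by
      rw [hB]
      rw [Nat.le_div_iff_mul_le (by omega)]
      omega
    have hmul : P * B = k * B + s * B := by rw [hP]; ring
    set m := k * B + r with hm
    have hn' : n = m + s * B := by omega
    have htw : treewidth (cg k s m n) = k := cg_treewidth hm hn' hB2 (by omega)
    have hcount := cg_low_count (d := d) hm hn' hB2 (by omega)
    have hmem : (Finset.univ.filter (fun v : Fin n => degN (cg k s m n) v ≤ d)).card ∈
        {m : ℕ | ∃ G : SimpleGraph (Fin n),
          treewidth G = k ∧ {v : Fin n | degN G v ≤ d}.ncard = m} := by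
      refine ⟨cg k s m n, htw, ?_⟩
      rw [ncard_setOf_eq_card_filter]
      convert rfl
    have hinf := Nat.sInf_le hmem
    have hrP : r < P := Nat.mod_lt n (by omega)
    calc f n ≤ (Finset.univ.filter (fun v : Fin n => degN (cg k s m n) v ≤ d)).card := hinf
      _ ≤ s * B + r + 2 * k := hcount
      _ ≤ s * (n / P) + 3 * P := by rw [← hB]; omega
  -- nonemptiness for the lower bound on f itself
  have claimC : ∀ n : ℕ, 2 * P ≤ n → s * n ≤ P * f n := by
    intro n hn
    apply claimA n (by omega)
    apply Nat.sInf_mem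
    -- nonempty: from claimB's construction
    set B := n / P with hB
    set r := n % P with hr
    have hBr : P * B + r = n := Nat.div_add_mod n P
    have hB2 : 2 ≤ B := by
      rw [hB, Nat.le_div_iff_mul_le (by omega)]
      omega
    have hmul : P * B = k * B + s * B := by rw [hP]; ring
    set m := k * B + r with hm
    have hn' : n = m + s * B := by omega
    exact ⟨_, ⟨cg k s m n, cg_treewidth hm hn' hB2 (by omega), rfl⟩⟩
  -- now the real-number squeeze
  have hsR : (s : ℝ) = (d : ℝ) - 2 * k + 1 := by
    rw [hs]
    push_cast [Nat.cast_sub hd]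
    ring
  have hPR : (P : ℝ) = (d : ℝ) - k + 1 := by
    rw [hP]
    push_cast [hsR]
    ring
  have hPpos : (0 : ℝ) < P := by positivity
  have hgoal : ((d : ℝ) - 2 * k + 1) / ((d : ℝ) - k + 1) = (s : ℝ) / P := by
    rw [hsR, hPR]
  rw [hgoal]
  apply tendsto_of_tendsto_of_tendsto_of_le_of_le'
    (g := fun _ : ℕ => (s : ℝ) / P)
    (h := fun n : ℕ => (s : ℝ) / P + (3 * P) / n)
  · exact tendsto_const_nhds
  · have : Filter.Tendsto (fun n : ℕ => (3 * (P : ℝ)) / n) Filter.atTop (nhds 0) :=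
      tendsto_const_div_atTop_nhds_zero_nat _
    simpa using tendsto_const_nhds.add this
  · filter_upwards [Filter.eventually_ge_atTop (2 * P)] with n hn
    have h1 := claimC n hn
    have hnpos : (0 : ℝ) < n := by
      have : 0 < n := by omega
      positivity
    rw [div_le_div_iff₀ hPpos hnpos]
    calc (s : ℝ) * n ≤ (P : ℝ) * f n := by exact_mod_cast h1
      _ = (f n : ℝ) * P := by ring
  · filter_upwards [Filter.eventually_ge_atTop (2 * P)] with n hn
    have h1 := claimB n hn
    have hnpos : (0 : ℝ) < n := by
      have : 0 < n := by omega
      positivity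
    have h2 : (f n : ℝ) ≤ s * (↑(n / P)) + 3 * P := by exact_mod_cast h1
    have h3 : (↑(n / P) : ℝ) ≤ (n : ℝ) / P := Nat.cast_div_le
    have h5 : (s : ℝ) * (↑(n / P) : ℝ) ≤ (s : ℝ) * ((n : ℝ) / P) :=
      mul_le_mul_of_nonneg_left h3 (by positivity)
    have h4 : (f n : ℝ) ≤ (s : ℝ) * ((n : ℝ) / P) + 3 * P := by linarith
    calc (f n : ℝ) / n ≤ ((s : ℝ) * ((n : ℝ) / P) + 3 * P) / n := by
          gcongr
      _ = (s : ℝ) / P + (3 * P) / n := by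
          field_simp
end

section
/- For all integers 0 ≤ t ≤ k, every graph G on n vertices with treewidth at most k contains a set S of at least (t+1)·n/(k+1) vertices such that the induced subgraph G[S] has treewidth at most t. -/
lemma top_subset_aux {α : Type*} [Fintype α] [DecidableEq α] (w : α → ℕ) :
    ∀ r, r ≤ Fintype.card α →
      ∃ T : Finset α, T.card = r ∧ ∀ a ∉ T, ∀ b ∈ T, w a ≤ w b := by
  intro r
  induction r with
  | zero => intro _; exact ⟨∅, rfl, by simp⟩
  | succ r ih =>
    intro hr
    obtain ⟨T, hTcard, hTtop⟩ := ih (Nat.le_of_succ_le hr)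
    have hne : (Tᶜ : Finset α).Nonempty := by
      rw [← Finset.card_pos, Finset.card_compl, hTcard]
      omega
    obtain ⟨x, hx, hxmax⟩ := Finset.exists_max_image Tᶜ w hne
    have hxT : x ∉ T := Finset.mem_compl.mp hx
    refine ⟨insert x T, ?_, ?_⟩
    · rw [Finset.card_insert_of_notMem hxT, hTcard]
    · intro a ha b hb
      have haT : a ∉ T := fun h => ha (Finset.mem_insert_of_mem h)
      rcases Finset.mem_insert.mp hb with rfl | hb
      · exact hxmax a (Finset.mem_compl.mpr haT)
      · exact hTtop a haT b hb

lemma exists_top_subset {α : Type*} [Fintype α] [DecidableEq α] (w : α → ℕ)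
    (r : ℕ) (hr : r ≤ Fintype.card α) :
    ∃ T : Finset α, T.card = r ∧ r * (∑ a, w a) ≤ Fintype.card α * ∑ a ∈ T, w a := by
  obtain ⟨T, hTcard, hTtop⟩ := top_subset_aux w r hr
  refine ⟨T, hTcard, ?_⟩
  have hsplit : ∑ a ∈ T, w a + ∑ a ∈ Tᶜ, w a = ∑ a, w a := Finset.sum_add_sum_compl T w
  have key : r * ∑ a ∈ Tᶜ, w a ≤ (Fintype.card α - r) * ∑ a ∈ T, w a := by
    rcases (Tᶜ : Finset α).eq_empty_or_nonempty with he | hne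
    · simp [he]
    · obtain ⟨x, hx, hxmax⟩ := Finset.exists_max_image Tᶜ w hne
      have h1 : ∑ a ∈ Tᶜ, w a ≤ (Fintype.card α - r) * w x := by
        have := Finset.sum_le_card_nsmul Tᶜ w (w x) (fun a ha => hxmax a ha)
        simpa [Finset.card_compl, hTcard, smul_eq_mul] using this
      have h2 : r * w x ≤ ∑ a ∈ T, w a := by
        have := Finset.card_nsmul_le_sum T w (w x)
          (fun b hb => hTtop x (Finset.mem_compl.mp hx) b hb)
        simpa [hTcard, smul_eq_mul] using this
      calc r * ∑ a ∈ Tᶜ, w a ≤ r * ((Fintype.card α - r) * w x) := Nat.mul_le_mul_left _ h1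
        _ = (Fintype.card α - r) * (r * w x) := by ring
        _ ≤ (Fintype.card α - r) * ∑ a ∈ T, w a := Nat.mul_le_mul_left _ h2
  have hcr : r + (Fintype.card α - r) = Fintype.card α := by omega
  calc r * (∑ a, w a) = r * ∑ a ∈ T, w a + r * ∑ a ∈ Tᶜ, w a := by rw [← hsplit]; ring
    _ ≤ r * ∑ a ∈ T, w a + (Fintype.card α - r) * ∑ a ∈ T, w a := by omega
    _ = Fintype.card α * ∑ a ∈ T, w a := by rw [← Nat.add_mul, hcr]

noncomputable def colStep (n k : ℕ) (Sel : ∀ j : Fin n, k + 1 ≤ (j : ℕ) → Finset (Fin n))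
    (j : ℕ) (g : Fin n → Fin (k + 1)) : Fin (k + 1) :=
  if h : k + 1 ≤ j then
    if hn : j < n then
      (if hex : ∃ a : Fin (k + 1), a ∉ (Sel ⟨j, hn⟩ h).image g then hex.choose
       else ⟨0, Nat.succ_pos k⟩)
    else ⟨0, Nat.succ_pos k⟩
  else ⟨j, lt_of_not_ge h⟩

noncomputable def colF (n k : ℕ) (Sel : ∀ j : Fin n, k + 1 ≤ (j : ℕ) → Finset (Fin n)) :
    ℕ → Fin n → Fin (k + 1)
  | 0 => fun _ => ⟨0, Nat.succ_pos k⟩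
  | j + 1 => fun i => if (i : ℕ) = j then colStep n k Sel j (colF n k Sel j)
      else colF n k Sel j i

lemma colF_eq (n k : ℕ) (Sel : ∀ j : Fin n, k + 1 ≤ (j : ℕ) → Finset (Fin n)) :
    ∀ (m : ℕ) (i : Fin n), (i : ℕ) < m →
      colF n k Sel m i = colStep n k Sel i (colF n k Sel i) := by
  intro m
  induction m with
  | zero => intro i hi; omega
  | succ m ih =>
    intro i hi
    by_cases h : (i : ℕ) = m
    · subst h
      simp [colF]
    · have : (i : ℕ) < m := by omega
      show (if (i : ℕ) = m then colStep n k Sel m (colF n k Sel m)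
        else colF n k Sel m i) = colStep n k Sel i (colF n k Sel i)
      rw [if_neg h]
      exact ih i this

lemma exists_coloring (n k : ℕ) (Sel : ∀ j : Fin n, k + 1 ≤ (j : ℕ) → Finset (Fin n))
    (hcard : ∀ j hj, (Sel j hj).card = k) (hlt : ∀ j hj, ∀ i ∈ Sel j hj, i < j) :
    ∃ c : Fin n → Fin (k + 1),
      (∀ j : Fin n, (h : (j : ℕ) < k + 1) → c j = ⟨(j : ℕ), h⟩) ∧
      (∀ j : Fin n, (hj : k + 1 ≤ (j : ℕ)) → ∀ i ∈ Sel j hj, c i ≠ c j) := by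
  classical
  refine ⟨fun i => colStep n k Sel i (colF n k Sel i), ?_, ?_⟩
  · intro j h
    unfold colStep
    simp only [dif_neg (not_le.mpr h)]
  · intro j hj i hiS
    show colStep n k Sel i (colF n k Sel i) ≠ colStep n k Sel j (colF n k Sel j)
    have hij : (i : ℕ) < (j : ℕ) := hlt j hj i hiS
    have hci : colStep n k Sel i (colF n k Sel i) = colF n k Sel j i :=
      (colF_eq n k Sel j i hij).symm
    rw [hci]
    -- compute c j
    have hex : ∃ a : Fin (k + 1), a ∉ (Sel ⟨(j : ℕ), j.isLt⟩ hj).image (colF n k Sel j) := by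
      have hcardlt : ((Sel ⟨(j : ℕ), j.isLt⟩ hj).image (colF n k Sel j)).card < k + 1 := by
        calc ((Sel ⟨(j : ℕ), j.isLt⟩ hj).image (colF n k Sel j)).card
            ≤ (Sel ⟨(j : ℕ), j.isLt⟩ hj).card := Finset.card_image_le
          _ = k := hcard _ _
          _ < k + 1 := Nat.lt_succ_self k
      have hne : (((Sel ⟨(j : ℕ), j.isLt⟩ hj).image (colF n k Sel j))ᶜ).Nonempty := by
        rw [← Finset.card_pos, Finset.card_compl]
        simp only [Fintype.card_fin]
        omega
      obtain ⟨a, ha⟩ := hne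
      exact ⟨a, Finset.mem_compl.mp ha⟩
    have hcj : colStep n k Sel j (colF n k Sel j)
        = (if hex' : ∃ a : Fin (k + 1), a ∉ (Sel ⟨(j : ℕ), j.isLt⟩ hj).image (colF n k Sel (j : ℕ)) then hex'.choose else ⟨0, Nat.succ_pos k⟩) := by
      unfold colStep
      rw [dif_pos hj, dif_pos j.isLt]
    rw [hcj, dif_pos hex]
    intro hEq
    apply hex.choose_spec
    rw [← hEq]
    apply Finset.mem_image_of_mem
    exact hiS
/-- For integers `0 ≤ t ≤ k`, every graph `G` on `n` vertices with treewidth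
at most `k` contains a set `S` of at least `(t+1)·n/(k+1)` vertices such that the induced
subgraph `G[S]` has treewidth at most `t`. -/
theorem stmt4 {V : Type*} [Fintype V] (t k : ℕ) (htk : t ≤ k)
    (G : SimpleGraph V) (htw : treewidth G ≤ k) :
    ∃ S : Finset V,
      ((t + 1 : ℝ) * Fintype.card V / (k + 1) ≤ S.card) ∧
      treewidth (G.induce (S : Set V)) ≤ t := by
  classical
  rcases isEmpty_or_nonempty V with hV | hV
  · -- empty vertex set
    refine ⟨∅, ?_, ?_⟩
    · simp [Fintype.card_eq_zero]
    · have hset : {k0 : ℕ | ∃ H : SimpleGraph ((↑(∅ : Finset V)) : Set V),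
          IsKTree k0 H ∧ G.induce (↑(∅ : Finset V)) ≤ H} = ∅ := by
        apply Set.eq_empty_iff_forall_notMem.mpr
        rintro k0 ⟨H, ⟨n', e', hn', -, -⟩, -⟩
        have h0 : (0 : ℕ) < n' := by omega
        exact absurd (e'.symm ⟨0, h0⟩).2 (by simp)
      show sInf _ ≤ t
      rw [hset, Nat.sInf_empty]
      omega
  · -- nonempty
    set TS : Set ℕ := {k0 : ℕ | ∃ H : SimpleGraph V, IsKTree k0 H ∧ G ≤ H} with hTS
    have hcardpos : 0 < Fintype.card V := Fintype.card_pos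
    have hTSne : TS.Nonempty := by
      refine ⟨Fintype.card V - 1, ⊤, ⟨Fintype.card V, Fintype.equivFin V, by omega,
        ?_, ?_⟩, le_top⟩
      · intro i j hij _
        exact ((Fintype.equivFin V).symm.injective.ne (Fin.ne_of_lt hij))
      · intro j hj
        have := j.isLt
        omega
    have hk'mem : sInf TS ∈ TS := Nat.sInf_mem hTSne
    have hk'k : sInf TS ≤ k := htw
    set k' : ℕ := sInf TS with hk'
    obtain ⟨H, ⟨n₂, e, hkn, hadj1, hrec⟩, hGH⟩ := hk'mem
    have hcardV : Fintype.card V = n₂ := by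
      rw [← Fintype.card_fin n₂]; exact Fintype.card_congr e
    set Sel : ∀ j : Fin n₂, k' + 1 ≤ (j : ℕ) → Finset (Fin n₂) :=
      fun j hj => (hrec j hj).choose with hSel
    have hScard : ∀ j hj, (Sel j hj).card = k' := fun j hj => (hrec j hj).choose_spec.1
    have hSlt : ∀ j hj, ∀ i ∈ Sel j hj, i < j := fun j hj => (hrec j hj).choose_spec.2.1
    have hSiff : ∀ j hj, ∀ i : Fin n₂, i < j →
        (H.Adj (e.symm i) (e.symm j) ↔ i ∈ Sel j hj) :=
      fun j hj => (hrec j hj).choose_spec.2.2.1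
    have hSclique : ∀ j hj, ∀ i ∈ Sel j hj, ∀ i' ∈ Sel j hj, i ≠ i' →
        H.Adj (e.symm i) (e.symm i') := fun j hj => (hrec j hj).choose_spec.2.2.2
    obtain ⟨c, hc1, hc2⟩ := exists_coloring n₂ k' Sel hScard hSlt
    -- properness
    have hproper : ∀ i j : Fin n₂, i < j → H.Adj (e.symm i) (e.symm j) → c i ≠ c j := by
      intro i j hij hadj
      by_cases hjk : (j : ℕ) < k' + 1
      · have hik : (i : ℕ) < k' + 1 := lt_trans hij hjk
        rw [hc1 i hik, hc1 j hjk]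
        simp only [ne_eq, Fin.mk.injEq]
        omega
      · have hj : k' + 1 ≤ (j : ℕ) := le_of_not_gt hjk
        exact hc2 j hj i ((hSiff j hj i hij).mp hadj)
    -- injectivity of c on each Sel
    have hinj : ∀ j hj, Set.InjOn c ↑(Sel j hj) := by
      intro j hj i hi i' hi' hEq
      by_contra hne
      have hadj := hSclique j hj i hi i' hi' hne
      rcases lt_trichotomy i i' with hlt | heq | hlt
      · exact hproper i i' hlt hadj hEq
      · exact hne heq
      · exact hproper i' i hlt (hadj.symm) hEq.symm
    -- image of c on Sel j is everything except c j
    have himg : ∀ j hj, (Sel j hj).image c = Finset.univ.erase (c j) := by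
      intro j hj
      apply Finset.eq_of_subset_of_card_le
      · intro a ha
        obtain ⟨i, hi, rfl⟩ := Finset.mem_image.mp ha
        exact Finset.mem_erase.mpr ⟨hc2 j hj i hi, Finset.mem_univ _⟩
      · rw [Finset.card_erase_of_mem (Finset.mem_univ _),
          Finset.card_image_of_injOn (hinj j hj), hScard j hj]
        simp
    -- color class sizes
    set w : Fin (k' + 1) → ℕ :=
      fun a => (Finset.univ.filter fun j : Fin n₂ => c j = a).card with hw
    have hsumw : ∑ a, w a = n₂ := by
      rw [hw]
      rw [← Finset.card_eq_sum_card_fiberwise (f := c) (fun j _ => Finset.mem_univ (c j))]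
      simp
    set s : ℕ := min t k' with hs
    obtain ⟨T, hTcard, hTsum⟩ := exists_top_subset w (s + 1)
      (by rw [Fintype.card_fin]; omega)
    set S' : Finset (Fin n₂) := Finset.univ.filter (fun j => c j ∈ T) with hS'
    set m : ℕ := S'.card with hm
    have hmsum : m = ∑ a ∈ T, w a := by
      rw [hm, Finset.card_eq_sum_card_fiberwise
        (f := c) (s := S') (t := T) (fun j hj => (Finset.mem_filter.mp hj).2)]
      apply Finset.sum_congr rfl
      intro a haT
      congr 1
      ext j
      simp only [hS', Finset.mem_filter, Finset.mem_univ, true_and]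
      constructor
      · rintro ⟨-, h⟩; exact h
      · intro h; exact ⟨h ▸ haT, h⟩
    have hkey : (s + 1) * n₂ ≤ (k' + 1) * m := by
      calc (s + 1) * n₂ = (s + 1) * ∑ a, w a := by rw [hsumw]
        _ ≤ Fintype.card (Fin (k' + 1)) * ∑ a ∈ T, w a := hTsum
        _ = (k' + 1) * m := by rw [Fintype.card_fin, hmsum]
    -- first k'+1 vertices
    set vmap : Fin (k' + 1) → Fin n₂ := fun a => ⟨a, lt_of_lt_of_le a.isLt hkn⟩ with hvmap
    have hvinj : Function.Injective vmap := by
      intro a b hab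
      simp only [hvmap, Fin.mk.injEq] at hab
      exact Fin.ext hab
    have hcvmap : ∀ a, c (vmap a) = a := by
      intro a
      rw [hc1 (vmap a) a.isLt]
    set B : Finset (Fin n₂) := S'.filter (fun x => (x : ℕ) < k' + 1) with hB
    have hBeq : B = T.image vmap := by
      ext x
      simp only [hB, Finset.mem_filter, Finset.mem_image, hS', Finset.mem_univ, true_and]
      constructor
      · rintro ⟨hcx, hxk⟩
        refine ⟨c x, hcx, ?_⟩
        have : c x = ⟨(x : ℕ), hxk⟩ := hc1 x hxk
        rw [this]
      · rintro ⟨a, haT, rfl⟩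
        exact ⟨by rw [hcvmap]; exact haT, a.isLt⟩
    have hBcard : B.card = s + 1 := by
      rw [hBeq, Finset.card_image_of_injective _ hvinj, hTcard]
    have hBsub : B ⊆ S' := Finset.filter_subset _ _
    have hsm : s + 1 ≤ m := by
      rw [← hBcard, hm]; exact Finset.card_le_card hBsub
    -- the order isomorphism
    set oi : Fin m ≃o {x // x ∈ S'} := S'.orderIsoOfFin hm.symm with hoi
    have hposlt : ∀ q : Fin m, ((oi q : Fin n₂) : ℕ) < k' + 1 ↔ (q : ℕ) < s + 1 := by
      intro q
      constructor
      · -- oi q < k'+1 → q < s+1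
        intro hlt
        by_contra hq
        push_neg at hq
        -- map range (q+1) into B
        have hcardle : (Finset.range ((q : ℕ) + 1)).card ≤ B.card := by
          apply Finset.card_le_card_of_injOn
            (fun p => if hp : p < m then ((oi ⟨p, hp⟩ : Fin n₂)) else (oi q : Fin n₂))
          · intro p hp
            have hpq : p ≤ (q : ℕ) := by
              have := Finset.mem_range.mp hp; omega
            have hpm : p < m := lt_of_le_of_lt hpq q.isLt
            simp only [dif_pos hpm]
            have hle : oi ⟨p, hpm⟩ ≤ oi q := oi.le_iff_le.mpr (by
              show (⟨p, hpm⟩ : Fin m) ≤ q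
              exact hpq)
            have hvle : ((oi ⟨p, hpm⟩ : Fin n₂) : ℕ) ≤ ((oi q : Fin n₂) : ℕ) := hle
            refine Finset.mem_filter.mpr ⟨(oi ⟨p, hpm⟩).2, by omega⟩
          · intro p hp p' hp' hEq
            have hpq : p ≤ (q : ℕ) := by have := Finset.mem_range.mp hp; omega
            have hpq' : p' ≤ (q : ℕ) := by have := Finset.mem_range.mp hp'; omega
            have hpm : p < m := lt_of_le_of_lt hpq q.isLt
            have hpm' : p' < m := lt_of_le_of_lt hpq' q.isLt
            simp only [dif_pos hpm, dif_pos hpm'] at hEq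
            have : oi ⟨p, hpm⟩ = oi ⟨p', hpm'⟩ := Subtype.ext hEq
            have h5 := oi.injective this
            exact congrArg Fin.val h5
        rw [Finset.card_range, hBcard] at hcardle
        omega
      · -- q < s+1 → oi q < k'+1
        intro hq
        by_contra hge
        push_neg at hge
        have hcardle : B.card ≤ (Finset.range (q : ℕ)).card := by
          apply Finset.card_le_card_of_injOn
            (fun x => if hx : x ∈ S' then ((oi.symm ⟨x, hx⟩ : Fin m) : ℕ) else 0)
          · intro x hx
            have hxS' : x ∈ S' := hBsub hx
            have hxk : (x : ℕ) < k' + 1 := (Finset.mem_filter.mp hx).2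
            simp only [dif_pos hxS']
            rw [Finset.mem_coe, Finset.mem_range]
            have hlt' : (⟨x, hxS'⟩ : {y // y ∈ S'}) < oi q := by
              show x < (oi q : Fin n₂)
              show (x : ℕ) < ((oi q : Fin n₂) : ℕ)
              omega
            have : oi.symm ⟨x, hxS'⟩ < oi.symm (oi q) := oi.symm.lt_iff_lt.mpr hlt'
            rw [oi.symm_apply_apply] at this
            exact this
          · intro x hx x' hx' hEq
            have hxS' : x ∈ S' := hBsub hx
            have hxS'' : x' ∈ S' := hBsub hx'
            simp only [dif_pos hxS', dif_pos hxS''] at hEq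
            have : oi.symm ⟨x, hxS'⟩ = oi.symm ⟨x', hxS''⟩ := Fin.ext hEq
            have h5 := oi.symm.injective this
            exact congrArg Subtype.val h5
        rw [Finset.card_range, hBcard] at hcardle
        omega
    -- the vertex subset
    set S : Finset V := S'.image (fun j => e.symm j) with hSdef
    have hcardS : S.card = m := by
      rw [hSdef, Finset.card_image_of_injective _ e.symm.injective, hm]
    refine ⟨S, ?_, ?_⟩
    · -- size bound
      have hnat : (t + 1) * n₂ ≤ (k + 1) * m := by
        rcases le_total t k' with h | h
        · have hst : s = t := min_eq_left h
          calc (t + 1) * n₂ = (s + 1) * n₂ := by rw [hst]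
            _ ≤ (k' + 1) * m := hkey
            _ ≤ (k + 1) * m := Nat.mul_le_mul (by omega) le_rfl
        · have hst : s = k' := min_eq_right h
          have h1 : (k' + 1) * n₂ ≤ (k' + 1) * m := by rw [hst] at hkey; exact hkey
          have h2 : n₂ ≤ m := Nat.le_of_mul_le_mul_left h1 (Nat.succ_pos k')
          calc (t + 1) * n₂ ≤ (t + 1) * m := Nat.mul_le_mul le_rfl h2
            _ ≤ (k + 1) * m := Nat.mul_le_mul (by omega) le_rfl
      rw [hcardV, hcardS]
      rw [div_le_iff₀ (by positivity)]
      have : ((t : ℝ) + 1) * n₂ ≤ (k + 1) * m := by exact_mod_cast hnat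
      nlinarith [this]
    · -- treewidth bound
      have hAdjIff : ∀ a b : ((↑S : Set V)), (H.induce (↑S : Set V)).Adj a b ↔ H.Adj ↑a ↑b :=
        fun a b => Iff.rfl
      -- the equivalence
      have hmemS : ∀ q : Fin m, (e.symm ((oi q : Fin n₂))) ∈ (↑S : Set V) := by
        intro q
        rw [Finset.mem_coe, hSdef]
        exact Finset.mem_image_of_mem _ (oi q).2
      set gfun : Fin m → (↑S : Set V) := fun q => ⟨e.symm ((oi q : Fin n₂)), hmemS q⟩ with hgfun
      have hgbij : Function.Bijective gfun := by
        constructor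
        · intro q q' hEq
          have h1 : e.symm ((oi q : Fin n₂)) = e.symm ((oi q' : Fin n₂)) :=
            congrArg Subtype.val hEq
          have h2 : (oi q : Fin n₂) = (oi q' : Fin n₂) := e.symm.injective h1
          exact oi.injective (Subtype.ext h2)
        · rintro ⟨v, hv⟩
          rw [Finset.mem_coe, hSdef] at hv
          obtain ⟨j, hj, rfl⟩ := Finset.mem_image.mp hv
          refine ⟨oi.symm ⟨j, hj⟩, ?_⟩
          apply Subtype.ext
          show e.symm ((oi (oi.symm ⟨j, hj⟩) : Fin n₂)) = e.symm j
          rw [oi.apply_symm_apply]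
      set eS : (↑S : Set V) ≃ Fin m := (Equiv.ofBijective gfun hgbij).symm with heSdef
      have heS : ∀ q : Fin m, eS.symm q = gfun q := by
        intro q
        rw [heSdef, Equiv.symm_symm]
        rfl
      refine le_trans (Nat.sInf_le ?_) (by omega : s ≤ t)
      refine ⟨H.induce (↑S : Set V), ⟨m, eS, hsm, ?_, ?_⟩, ?_⟩
      · -- first s+1 vertices form a clique
        intro i j hij hjs
        rw [heS, heS]
        rw [hgfun]
        show H.Adj (e.symm ((oi i : Fin n₂))) (e.symm ((oi j : Fin n₂)))
        apply hadj1
        · exact Subtype.coe_lt_coe.mpr (oi.lt_iff_lt.mpr hij)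
        · exact (hposlt j).mpr hjs
      · -- later vertices
        intro q hq
        set x : Fin n₂ := (oi q : Fin n₂) with hx
        have hxk : k' + 1 ≤ (x : ℕ) := by
          by_contra hc
          push_neg at hc
          have := (hposlt q).mp hc
          omega
        have hcxT : c x ∈ T := (Finset.mem_filter.mp (oi q).2).2
        set D : Finset (Fin n₂) := (Sel x hxk).filter (fun i => c i ∈ T) with hD
        have hDsub : D ⊆ Sel x hxk := Finset.filter_subset _ _
        have hDS' : ∀ i ∈ D, i ∈ S' := by
          intro i hi
          exact Finset.mem_filter.mpr ⟨Finset.mem_univ _, (Finset.mem_filter.mp hi).2⟩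
        have himgD : D.image c = T.erase (c x) := by
          ext a
          simp only [Finset.mem_image, Finset.mem_erase]
          constructor
          · rintro ⟨i, hi, rfl⟩
            obtain ⟨hiSel, hiT⟩ := Finset.mem_filter.mp hi
            refine ⟨?_, hiT⟩
            have : c i ∈ (Sel x hxk).image c := Finset.mem_image_of_mem c hiSel
            rw [himg x hxk] at this
            exact (Finset.mem_erase.mp this).1
          · rintro ⟨hne, haT⟩
            have : a ∈ Finset.univ.erase (c x) := Finset.mem_erase.mpr ⟨hne, Finset.mem_univ _⟩
            rw [← himg x hxk] at this
            obtain ⟨i, hi, rfl⟩ := Finset.mem_image.mp this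
            exact ⟨i, Finset.mem_filter.mpr ⟨hi, haT⟩, rfl⟩
        have hDcard : D.card = s := by
          have h1 : (D.image c).card = D.card :=
            Finset.card_image_of_injOn ((hinj x hxk).mono (by
              intro i hi
              exact hDsub hi))
          rw [himgD] at h1
          rw [← h1, Finset.card_erase_of_mem hcxT, hTcard]
          omega
        set W : Finset (Fin m) := D.attach.image
          (fun i => oi.symm ⟨i.1, hDS' i.1 i.2⟩) with hW
        have hWmem : ∀ p : Fin m, p ∈ W ↔ (oi p : Fin n₂) ∈ D := by
          intro p
          constructor
          · intro hp
            obtain ⟨i, -, rfl⟩ := Finset.mem_image.mp hp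
            rw [oi.apply_symm_apply]
            exact i.2
          · intro hp
            rw [hW]
            apply Finset.mem_image.mpr
            refine ⟨⟨(oi p : Fin n₂), hp⟩, Finset.mem_attach _ _, ?_⟩
            show oi.symm ⟨(oi p : Fin n₂), _⟩ = p
            have : (⟨(oi p : Fin n₂), (oi p).2⟩ : {y // y ∈ S'}) = oi p := Subtype.ext rfl
            rw [this, oi.symm_apply_apply]
        refine ⟨W, ?_, ?_, ?_, ?_⟩
        · rw [hW]
          rw [Finset.card_image_of_injOn, Finset.card_attach, hDcard]
          intro i hi i' hi' hEq
          have h1 : (⟨i.1, hDS' i.1 i.2⟩ : {y // y ∈ S'}) = ⟨i'.1, hDS' i'.1 i'.2⟩ :=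
            oi.symm.injective hEq
          have h2 : (i.1 : Fin n₂) = i'.1 := Subtype.mk_eq_mk.mp h1
          exact Subtype.ext h2
        · intro p hp
          have hpD : (oi p : Fin n₂) ∈ D := (hWmem p).mp hp
          have hlt : (oi p : Fin n₂) < x := hSlt x hxk _ (hDsub hpD)
          have : oi p < oi q := Subtype.coe_lt_coe.mp (by rw [← hx] at *; exact hlt)
          exact oi.lt_iff_lt.mp this
        · intro p hpq
          rw [heS, heS, hgfun]
          have hpltx : (oi p : Fin n₂) < x := Subtype.coe_lt_coe.mpr (oi.lt_iff_lt.mpr hpq)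
          constructor
          · intro hadj
            have : (oi p : Fin n₂) ∈ Sel x hxk := (hSiff x hxk _ hpltx).mp hadj
            apply (hWmem p).mpr
            exact Finset.mem_filter.mpr ⟨this, (Finset.mem_filter.mp (oi p).2).2⟩
          · intro hp
            have hpD : (oi p : Fin n₂) ∈ D := (hWmem p).mp hp
            exact (hSiff x hxk _ hpltx).mpr (hDsub hpD)
        · intro p hp p' hp' hne
          rw [heS, heS, hgfun]
          have hpD : (oi p : Fin n₂) ∈ D := (hWmem p).mp hp
          have hpD' : (oi p' : Fin n₂) ∈ D := (hWmem p').mp hp'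
          have hne' : (oi p : Fin n₂) ≠ (oi p' : Fin n₂) := by
            intro hEq
            exact hne (oi.injective (Subtype.ext hEq))
          exact hSclique x hxk _ (hDsub hpD) _ (hDsub hpD') hne'
      · -- G.induce ≤ H.induce
        intro a b hab
        exact hGH hab
end

section
/- Let G be a k-tree on n ≥ 2k+1 vertices, and let (u_1, u_2, …, u_q) be a clique of G ordered by degree, i.e., deg_G(u_i) ≤ deg_G(u_{i+1}) for all 1 ≤ i ≤ q-1. Then deg_G(u_i) ≥ k+i-1 for all 1 ≤ i ≤ q. -/
open Finset in
private lemma card_prefix_lt {n : ℕ} {j : ℕ} (hj : j ≤ n) :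
    ((univ : Finset (Fin n)).filter (fun v : Fin n => (v : ℕ) < j)).card = j := by
  have h : ∀ m ∈ Finset.range j, m < n := fun m hm => lt_of_lt_of_le (mem_range.mp hm) hj
  have heq : (univ : Finset (Fin n)).filter (fun v : Fin n => (v : ℕ) < j)
      = (Finset.range j).attachFin h := by
    ext v
    simp [Finset.mem_attachFin]
  rw [heq, Finset.card_attachFin, Finset.card_range]

open Finset in
private lemma parent_lemma {n k : ℕ} (adj : Fin n → Fin n → Prop) (S : Fin n → Finset (Fin n))
    (hSiff : ∀ t : Fin n, k + 1 ≤ (t : ℕ) → ∀ i : Fin n, i < t → (adj i t ↔ i ∈ S t))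
    (C : Finset (Fin n)) (hne : C.Nonempty)
    (hclq : ∀ a ∈ C, ∀ b ∈ C, a ≠ b → adj a b)
    {j : ℕ} (hlt : ∀ v ∈ C, (v : ℕ) < j) :
    (∀ v ∈ C, (v : ℕ) < k + 1) ∨
      ∃ m : Fin n, k + 1 ≤ (m : ℕ) ∧ (m : ℕ) < j ∧ C ⊆ insert m (S m) := by
  set m := C.max' hne with hm
  by_cases hmk : (m : ℕ) < k + 1
  · left
    intro v hv
    have h1 : v ≤ m := C.le_max' v hv
    have h2 : (v : ℕ) ≤ (m : ℕ) := h1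
    omega
  · right
    refine ⟨m, by omega, hlt m (C.max'_mem hne), ?_⟩
    intro v hv
    rcases eq_or_ne v m with rfl | hvm
    · exact mem_insert_self _ _
    · have hvltm : v < m := lt_of_le_of_ne (C.le_max' v hv) hvm
      have hadj := hclq v hv m (C.max'_mem hne) hvm
      exact mem_insert_of_mem ((hSiff m (by omega) v hvltm).mp hadj)

open Finset in
open scoped Classical in
private lemma z_lemma {n k : ℕ} (adj : Fin n → Fin n → Prop) (S : Fin n → Finset (Fin n))
    (hScard : ∀ t : Fin n, k + 1 ≤ (t : ℕ) → (S t).card = k)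
    (hSlt : ∀ t : Fin n, k + 1 ≤ (t : ℕ) → ∀ i ∈ S t, i < t)
    (hSiff : ∀ t : Fin n, k + 1 ≤ (t : ℕ) → ∀ i : Fin n, i < t → (adj i t ↔ i ∈ S t))
    (hSclq : ∀ t : Fin n, k + 1 ≤ (t : ℕ) → ∀ i ∈ S t, ∀ i' ∈ S t, i ≠ i' → adj i i')
    (hkn : k + 1 ≤ n) :
    ∀ j, k + 1 ≤ j → j ≤ n →
      ∃ Z : Finset (Fin n), (∀ v ∈ Z, (v : ℕ) < k + 1) ∧
        (∀ t : Fin n, k + 1 ≤ (t : ℕ) → (t : ℕ) < j → Z ⊆ insert t (S t)) ∧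
        k + 1 ≤ Z.card + (j - (k + 1)) := by
  intro j hj
  induction j, hj using Nat.le_induction with
  | base =>
    intro _
    refine ⟨(univ : Finset (Fin n)).filter (fun v : Fin n => (v : ℕ) < k + 1),
      fun v hv => (mem_filter.mp hv).2, fun t ht ht' => by omega, ?_⟩
    rw [card_prefix_lt hkn]
    omega
  | succ j hj ih =>
    intro hjn
    obtain ⟨Z, hZinit, hZnodes, hZcard⟩ := ih (by omega)
    have hjlt : j < n := by omega
    set jf : Fin n := ⟨j, hjlt⟩ with hjf
    have hjfval : (jf : ℕ) = j := rfl
    have hjk : k + 1 ≤ (jf : ℕ) := by omega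
    set X : Finset (Fin n) := insert jf (S jf) with hX
    have hloss : (Z \ X).card ≤ 1 := by
      rcases Nat.eq_zero_or_pos k with hk0 | hkpos
      · have hZsub : Z ⊆ (univ : Finset (Fin n)).filter (fun v : Fin n => (v : ℕ) < k + 1) :=
          fun v hv => mem_filter.mpr ⟨mem_univ _, hZinit v hv⟩
        have h1 := card_le_card hZsub
        rw [card_prefix_lt hkn] at h1
        have h2 := card_le_card (sdiff_subset : Z \ X ⊆ Z)
        omega
      · have hSne : (S jf).Nonempty := by
          rw [← card_pos, hScard jf hjk]; omega
        have hSltj : ∀ v ∈ S jf, (v : ℕ) < j := by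
          intro v hv
          exact hSlt jf hjk v hv
        obtain ⟨P, hSP, hZP, hPcard⟩ :
            ∃ P : Finset (Fin n), S jf ⊆ P ∧ Z ⊆ P ∧ P.card = k + 1 := by
          rcases parent_lemma adj S hSiff (S jf) hSne
              (fun a ha b hb hab => hSclq jf hjk a ha b hb hab) hSltj with h | ⟨m, hm1, hm2, hm3⟩
          · exact ⟨(univ : Finset (Fin n)).filter (fun v : Fin n => (v : ℕ) < k + 1),
              fun v hv => mem_filter.mpr ⟨mem_univ _, h v hv⟩,
              fun v hv => mem_filter.mpr ⟨mem_univ _, hZinit v hv⟩,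
              card_prefix_lt hkn⟩
          · refine ⟨insert m (S m), hm3, hZnodes m hm1 hm2, ?_⟩
            rw [card_insert_of_notMem (fun hh => absurd (hSlt m hm1 m hh) (lt_irrefl m)),
              hScard m hm1]
        have hsub : Z \ X ⊆ P \ S jf := by
          intro v hv
          rw [mem_sdiff] at hv ⊢
          exact ⟨hZP hv.1, fun h => hv.2 (mem_insert_of_mem h)⟩
        have h1 := card_le_card hsub
        rw [card_sdiff_of_subset hSP, hPcard, hScard jf hjk] at h1
        omega
    refine ⟨Z ∩ X, fun v hv => hZinit v (mem_inter.mp hv).1, ?_, ?_⟩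
    · intro t ht htj
      rcases Nat.lt_or_ge (t : ℕ) j with h | h
      · exact subset_trans inter_subset_left (hZnodes t ht h)
      · have htval : (t : ℕ) = j := by omega
        have : t = jf := Fin.ext (by rw [htval, hjfval])
        rw [this]
        exact inter_subset_right
    · have h1 := Finset.card_inter_add_card_sdiff Z X
      omega

open Finset in
open scoped Classical in
private lemma key_lemma {n k : ℕ} (adj : Fin n → Fin n → Prop)
    (hsymm : ∀ a b, adj a b → adj b a)
    (hinit : ∀ a b : Fin n, a < b → (b : ℕ) < k + 1 → adj a b)
    (S : Fin n → Finset (Fin n))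
    (hScard : ∀ t : Fin n, k + 1 ≤ (t : ℕ) → (S t).card = k)
    (hSlt : ∀ t : Fin n, k + 1 ≤ (t : ℕ) → ∀ i ∈ S t, i < t)
    (hSiff : ∀ t : Fin n, k + 1 ≤ (t : ℕ) → ∀ i : Fin n, i < t → (adj i t ↔ i ∈ S t))
    (hSclq : ∀ t : Fin n, k + 1 ≤ (t : ℕ) → ∀ i ∈ S t, ∀ i' ∈ S t, i ≠ i' → adj i i')
    (hkn : k + 1 ≤ n) :
    ∀ j, k + 1 ≤ j → j ≤ n → ∀ C : Finset (Fin n), C.Nonempty →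
      (∀ a ∈ C, ∀ b ∈ C, a ≠ b → adj a b) →
      (∀ v ∈ C, (v : ℕ) < j) → k + C.card ≤ j →
      ∃ v ∈ C, k + C.card ≤
        ((univ : Finset (Fin n)).filter (fun w : Fin n => (w : ℕ) < j ∧ adj v w)).card + 1 := by
  intro j
  induction j using Nat.strong_induction_on with
  | _ j IH =>
  intro hj1 hjn C hne hclq hlt hcj
  have hc1 : 1 ≤ C.card := card_pos.mpr hne
  rcases eq_or_lt_of_le hcj with heq | hlt2
  · -- base: j = k + C.card, use the Z-lemma
    obtain ⟨Z, hZinit, hZnodes, hZcard⟩ :=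
      z_lemma adj S hScard hSlt hSiff hSclq hkn j hj1 hjn
    obtain ⟨P, hCP, hZP, hPcard⟩ :
        ∃ P : Finset (Fin n), C ⊆ P ∧ Z ⊆ P ∧ P.card = k + 1 := by
      rcases parent_lemma adj S hSiff C hne hclq hlt with h | ⟨m, hm1, hm2, hm3⟩
      · exact ⟨(univ : Finset (Fin n)).filter (fun v : Fin n => (v : ℕ) < k + 1),
          fun v hv => mem_filter.mpr ⟨mem_univ _, h v hv⟩,
          fun v hv => mem_filter.mpr ⟨mem_univ _, hZinit v hv⟩,
          card_prefix_lt hkn⟩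
      · refine ⟨insert m (S m), hm3, hZnodes m hm1 hm2, ?_⟩
        rw [card_insert_of_notMem (fun hh => absurd (hSlt m hm1 m hh) (lt_irrefl m)),
          hScard m hm1]
    have hiu := Finset.card_inter_add_card_union C Z
    have hcu : (C ∪ Z).card ≤ k + 1 := by
      have := card_le_card (union_subset hCP hZP)
      omega
    have hpos : 0 < (C ∩ Z).card := by omega
    obtain ⟨v, hv⟩ := card_pos.mp hpos
    obtain ⟨hvC, hvZ⟩ := mem_inter.mp hv
    have hvk : (v : ℕ) < k + 1 := hZinit v hvZ
    have hsub : ((univ : Finset (Fin n)).filter (fun w : Fin n => (w : ℕ) < j)).erase v ⊆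
        (univ : Finset (Fin n)).filter (fun w : Fin n => (w : ℕ) < j ∧ adj v w) := by
      intro w hw
      obtain ⟨hwv, hwj⟩ := mem_erase.mp hw
      have hwj' : (w : ℕ) < j := (mem_filter.mp hwj).2
      refine mem_filter.mpr ⟨mem_univ _, hwj', ?_⟩
      by_cases hwk : (w : ℕ) < k + 1
      · rcases lt_trichotomy v w with h | h | h
        · exact hinit v w h hwk
        · exact absurd h.symm hwv
        · exact hsymm _ _ (hinit w v h hvk)
      · have hwk' : k + 1 ≤ (w : ℕ) := by omega
        have hvmem : v ∈ insert w (S w) := hZnodes w hwk' hwj' hvZ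
        have hvw : v ≠ w := fun h => hwv h.symm
        have hvS : v ∈ S w := by
          rcases mem_insert.mp hvmem with h | h
          · exact absurd h hvw
          · exact h
        have hvltw : v < w := by
          rw [Fin.lt_def]; omega
        exact (hSiff w hwk' v hvltw).mpr hvS
    have hecard : (((univ : Finset (Fin n)).filter (fun w : Fin n => (w : ℕ) < j)).erase v).card
        = j - 1 := by
      have hvmem' : v ∈ (univ : Finset (Fin n)).filter (fun w : Fin n => (w : ℕ) < j) :=
        mem_filter.mpr ⟨mem_univ _, hlt v hvC⟩
      rw [card_erase_of_mem hvmem', card_prefix_lt hjn]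
    have hce := card_le_card hsub
    exact ⟨v, hvC, by omega⟩
  · -- step
    by_cases hx : ∃ x ∈ C, (x : ℕ) = j - 1
    · obtain ⟨x, hxC, hxval⟩ := hx
      have hxk : k + 1 ≤ (x : ℕ) := by omega
      rcases eq_or_lt_of_le hc1 with hc1' | hc2
      · -- C.card = 1
        refine ⟨x, hxC, ?_⟩
        have hS : S x ⊆ (univ : Finset (Fin n)).filter (fun w : Fin n => (w : ℕ) < j ∧ adj x w) := by
          intro w hw
          have hwx : w < x := hSlt x hxk w hw
          have hwx' : (w : ℕ) < (x : ℕ) := hwx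
          refine mem_filter.mpr ⟨mem_univ _, by omega, hsymm _ _ ((hSiff x hxk w hwx).mpr hw)⟩
        have h1 := card_le_card hS
        rw [hScard x hxk] at h1
        omega
      · -- C.card ≥ 2
        set C' := C.erase x with hC'
        have hC'card : C'.card = C.card - 1 := card_erase_of_mem hxC
        have hC'ne : C'.Nonempty := card_pos.mp (by omega)
        have hC'lt : ∀ w ∈ C', (w : ℕ) < j - 1 := by
          intro w hw
          have h1 := hlt w (mem_of_mem_erase hw)
          have h2 : w ≠ x := ne_of_mem_erase hw
          have h3 : (w : ℕ) ≠ j - 1 := by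
            intro h
            exact h2 (Fin.ext (by omega))
          omega
        obtain ⟨v, hvC', hv⟩ := IH (j - 1) (by omega) (by omega) (by omega) C' hC'ne
          (fun a ha b hb hab => hclq a (mem_of_mem_erase ha) b (mem_of_mem_erase hb) hab)
          hC'lt (by omega)
        refine ⟨v, mem_of_mem_erase hvC', ?_⟩
        have hvx : adj v x := hclq v (mem_of_mem_erase hvC') x hxC (ne_of_mem_erase hvC')
        have hxnot : x ∉ (univ : Finset (Fin n)).filter
            (fun w : Fin n => (w : ℕ) < j - 1 ∧ adj v w) := by
          intro h
          have := (mem_filter.mp h).2.1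
          omega
        have hins : insert x ((univ : Finset (Fin n)).filter
            (fun w : Fin n => (w : ℕ) < j - 1 ∧ adj v w)) ⊆
            (univ : Finset (Fin n)).filter (fun w : Fin n => (w : ℕ) < j ∧ adj v w) := by
          intro w hw
          rcases mem_insert.mp hw with rfl | hw'
          · exact mem_filter.mpr ⟨mem_univ _, by omega, hvx⟩
          · have := mem_filter.mp hw'
            exact mem_filter.mpr ⟨mem_univ _, by omega, this.2.2⟩
        have h1 := card_le_card hins
        rw [card_insert_of_notMem hxnot] at h1
        omega
    · push_neg at hx
      obtain ⟨v, hvC, hv⟩ := IH (j - 1) (by omega) (by omega) (by omega) C hne hclq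
        (fun w hw => by have h1 := hlt w hw; have h2 := hx w hw; omega)
        (by omega)
      refine ⟨v, hvC, ?_⟩
      have hsub : ((univ : Finset (Fin n)).filter (fun w : Fin n => (w : ℕ) < j - 1 ∧ adj v w)) ⊆
          (univ : Finset (Fin n)).filter (fun w : Fin n => (w : ℕ) < j ∧ adj v w) := by
        intro w hw
        have := mem_filter.mp hw
        exact mem_filter.mpr ⟨mem_univ _, by omega, this.2.2⟩
      have := card_le_card hsub
      omega

open Finset

/-- Let `G` be a `k`-tree on `n ≥ 2k+1` vertices and let `u 0, …, u (q-1)`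
be a clique of `G` ordered by degree. Then (with 0-indexing) `deg (u i) ≥ k + i` for all `i`. -/
theorem stmt6 {V : Type*} [Fintype V] (k q : ℕ) (G : SimpleGraph V)
    (hG : IsKTree k G) (hn : 2 * k + 1 ≤ Fintype.card V)
    (u : Fin q → V) (hinj : Function.Injective u)
    (hclique : ∀ i j : Fin q, i ≠ j → G.Adj (u i) (u j))
    (hord : ∀ i j : Fin q, i ≤ j → degN G (u i) ≤ degN G (u j)) :
    ∀ i : Fin q, k + (i : ℕ) ≤ degN G (u i) := by
  classical
  obtain ⟨n, e, hkn, hinit0, hstep⟩ := hG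
  have hcardV : Fintype.card V = n := by
    rw [← Fintype.card_fin n]
    exact Fintype.card_congr e
  rw [hcardV] at hn
  choose S0 hScard0 hSlt0 hSiff0 hSclq0 using hstep
  set adj : Fin n → Fin n → Prop := fun a b => G.Adj (e.symm a) (e.symm b) with hadjdef
  set S : Fin n → Finset (Fin n) :=
    fun t => if h : k + 1 ≤ (t : ℕ) then S0 t h else ∅ with hSdef
  have hScard : ∀ t : Fin n, k + 1 ≤ (t : ℕ) → (S t).card = k := by
    intro t ht; simp only [hSdef, dif_pos ht]; exact hScard0 t ht
  have hSlt : ∀ t : Fin n, k + 1 ≤ (t : ℕ) → ∀ i ∈ S t, i < t := by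
    intro t ht; simp only [hSdef, dif_pos ht]; exact hSlt0 t ht
  have hSiff : ∀ t : Fin n, k + 1 ≤ (t : ℕ) → ∀ i : Fin n, i < t → (adj i t ↔ i ∈ S t) := by
    intro t ht i hi; simp only [hSdef, dif_pos ht]; exact hSiff0 t ht i hi
  have hSclq : ∀ t : Fin n, k + 1 ≤ (t : ℕ) → ∀ i ∈ S t, ∀ i' ∈ S t, i ≠ i' → adj i i' := by
    intro t ht; simp only [hSdef, dif_pos ht]; exact hSclq0 t ht
  have hsymm : ∀ a b : Fin n, adj a b → adj b a := fun a b h => h.symm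
  intro i
  have hmlt : ∀ m ∈ Finset.range ((i : ℕ) + 1), m < q := by
    intro m hm
    have h1 := mem_range.mp hm
    have h2 := i.isLt
    omega
  set T : Finset (Fin q) := (Finset.range ((i : ℕ) + 1)).attachFin hmlt with hTdef
  set C : Finset (Fin n) := T.image (fun m => e (u m)) with hCdef
  have hinj2 : Function.Injective (fun m : Fin q => e (u m)) :=
    fun a b h => hinj (e.injective h)
  have hCcard : C.card = (i : ℕ) + 1 := by
    rw [hCdef, card_image_of_injective _ hinj2, hTdef, Finset.card_attachFin,
      Finset.card_range]
  have hiT : i ∈ T := by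
    rw [hTdef, Finset.mem_attachFin]
    exact mem_range.mpr (by omega)
  have hne : C.Nonempty := ⟨e (u i), mem_image.mpr ⟨i, hiT, rfl⟩⟩
  have hclq : ∀ a ∈ C, ∀ b ∈ C, a ≠ b → adj a b := by
    intro a ha b hb hab
    obtain ⟨m1, _, rfl⟩ := mem_image.mp ha
    obtain ⟨m2, _, rfl⟩ := mem_image.mp hb
    have hm12 : m1 ≠ m2 := fun h => hab (by rw [h])
    have := hclique m1 m2 hm12
    simpa [hadjdef, e.symm_apply_apply] using this
  have hCk : C.card ≤ k + 1 := by
    rcases parent_lemma adj S hSiff C hne hclq (j := n) (fun v _ => v.isLt) with h | ⟨m, hm1, _, hsub⟩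
    · have hsub2 : C ⊆ (univ : Finset (Fin n)).filter (fun v : Fin n => (v : ℕ) < k + 1) :=
        fun v hv => mem_filter.mpr ⟨mem_univ _, h v hv⟩
      have := card_le_card hsub2
      rwa [card_prefix_lt hkn] at this
    · have hmS : m ∉ S m := fun hh => absurd (hSlt m hm1 m hh) (lt_irrefl m)
      have := card_le_card hsub
      rwa [card_insert_of_notMem hmS, hScard m hm1] at this
  have hkc : k + C.card ≤ n := by omega
  obtain ⟨v, hvC, hv⟩ := key_lemma adj hsymm hinit0 S hScard hSlt hSiff hSclq hkn
    n hkn (le_refl n) C hne hclq (fun v _ => v.isLt) hkc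
  obtain ⟨m, hmT, hme⟩ := mem_image.mp hvC
  have hmi : (m : ℕ) ≤ (i : ℕ) := by
    rw [hTdef, Finset.mem_attachFin] at hmT
    have := mem_range.mp hmT
    omega
  have hvm : e.symm v = u m := by rw [← hme, e.symm_apply_apply]
  -- degree bound for u m
  set B : Finset (Fin n) :=
    (univ : Finset (Fin n)).filter (fun w : Fin n => (w : ℕ) < n ∧ adj v w) with hBdef
  have hdegm : B.card ≤ degN G (u m) := by
    have hsub : (↑(B.image (fun w => e.symm w)) : Set V) ⊆ G.neighborSet (u m) := by
      intro y hy
      rw [Finset.mem_coe] at hy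
      obtain ⟨w, hw, rfl⟩ := mem_image.mp hy
      have hadj : adj v w := (mem_filter.mp hw).2.2
      rw [SimpleGraph.mem_neighborSet, ← hvm]
      exact hadj
    have h1 : (B.image (fun w => e.symm w)).card ≤ degN G (u m) := by
      rw [degN, ← Set.ncard_coe_finset]
      exact Set.ncard_le_ncard hsub (Set.toFinite _)
    rwa [card_image_of_injective _ e.symm.injective] at h1
  have hfin := hord m i (by rw [Fin.le_def]; exact hmi)
  omega
end

section
/- Let G be a k-tree on n vertices, and let C = (u_1, u_2, …, u_q) be a clique of G ordered by degree. If n ≥ k+q then deg_G(u_i) ≥ k+i-1 for all 1 ≤ i ≤ q. Otherwise n ≤ k+q-1, and deg_G(u_i) ≥ k+i-1 for 1 ≤ i ≤ n-k-1, while deg_G(u_i) ≥ n-1 for n-k ≤ i ≤ q. -/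
open scoped Classical


noncomputable def Dm {n : ℕ} (H : SimpleGraph (Fin n)) (m : ℕ) (i : Fin n) : ℕ :=
  (Finset.univ.filter fun j : Fin n => (j : ℕ) < m ∧ H.Adj i j).card

lemma card_filter_val_lt {n : ℕ} (m : ℕ) (hmn : m ≤ n) :
    (Finset.univ.filter fun j : Fin n => (j : ℕ) < m).card = m := by
  have h : (Finset.univ.filter fun j : Fin n => (j : ℕ) < m) =
      Finset.univ.map (Fin.castLEEmb hmn) := by
    ext j
    simp only [Finset.mem_filter, Finset.mem_map, Finset.mem_univ, true_and]
    constructor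
    · intro hj; exact ⟨⟨j.1, hj⟩, Fin.ext rfl⟩
    · rintro ⟨x, rfl⟩; exact x.2
  rw [h]; simp

lemma le_Dm_of_subset {n : ℕ} {H : SimpleGraph (Fin n)} {m : ℕ} {i : Fin n}
    {T : Finset (Fin n)} (h : ∀ t ∈ T, (t : ℕ) < m ∧ H.Adj i t) : T.card ≤ Dm H m i :=
  Finset.card_le_card (fun t ht => Finset.mem_filter.mpr ⟨Finset.mem_univ _, h t ht⟩)

lemma Dm_mono {n : ℕ} (H : SimpleGraph (Fin n)) {m m' : ℕ} (h : m ≤ m') (i : Fin n) :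
    Dm H m i ≤ Dm H m' i := by
  apply Finset.card_le_card
  intro j hj
  simp only [Finset.mem_filter, Finset.mem_univ, true_and] at *
  exact ⟨lt_of_lt_of_le hj.1 h, hj.2⟩

lemma Dm_succ {n : ℕ} (H : SimpleGraph (Fin n)) {m : ℕ} (hm : m < n) {i : Fin n}
    (hadj : H.Adj i ⟨m, hm⟩) : Dm H m i + 1 ≤ Dm H (m + 1) i := by
  have hnot : (⟨m, hm⟩ : Fin n) ∉
      (Finset.univ.filter fun j : Fin n => (j : ℕ) < m ∧ H.Adj i j) := by
    simp
  have hsub : insert (⟨m, hm⟩ : Fin n)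
      (Finset.univ.filter fun j : Fin n => (j : ℕ) < m ∧ H.Adj i j) ⊆
      (Finset.univ.filter fun j : Fin n => (j : ℕ) < m + 1 ∧ H.Adj i j) := by
    intro j hj
    rcases Finset.mem_insert.mp hj with rfl | hj
    · simp [hadj]
    · simp only [Finset.mem_filter, Finset.mem_univ, true_and] at *
      exact ⟨Nat.lt_succ_of_lt hj.1, hj.2⟩
  have h1 : (insert (⟨m, hm⟩ : Fin n)
      (Finset.univ.filter fun j : Fin n => (j : ℕ) < m ∧ H.Adj i j)).card
      = Dm H m i + 1 := Finset.card_insert_of_notMem hnot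
  have h2 := Finset.card_le_card hsub
  rw [h1] at h2
  exact h2

section Core
variable {n k : ℕ} {H : SimpleGraph (Fin n)}
variable (hbase : ∀ i j : Fin n, i < j → (j : ℕ) < k + 1 → H.Adj i j)
variable (hstep : ∀ j : Fin n, k + 1 ≤ (j : ℕ) →
      ∃ S : Finset (Fin n), S.card = k ∧ (∀ i ∈ S, i < j) ∧
        (∀ i : Fin n, i < j → (H.Adj i j ↔ i ∈ S)) ∧
        (∀ i ∈ S, ∀ i' ∈ S, i ≠ i' → H.Adj i i'))

include hstep in
lemma clique_le : ∀ m : ℕ, m ≤ n → ∀ W : Finset (Fin n), (∀ w ∈ W, (w : ℕ) < m) →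
    (∀ a ∈ W, ∀ b ∈ W, a ≠ b → H.Adj a b) → W.card ≤ k + 1 := by
  intro m
  induction m with
  | zero =>
    intro _ W hW _
    have : W = ∅ := by
      ext w; simp only [Finset.notMem_empty, iff_false]
      intro hw; exact absurd (hW w hw) (by omega)
    simp [this]
  | succ m ih =>
    intro hmn W hW hclq
    by_cases hmk : m + 1 ≤ k + 1
    · calc W.card ≤ (Finset.range (m + 1)).card := by
            refine Finset.card_le_card_of_injOn (fun w : Fin n => (w : ℕ)) ?_ ?_
            · intro w hw; exact Finset.mem_range.mpr (hW w hw)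
            · intro a _ b _ hab; exact Fin.ext hab
        _ = m + 1 := Finset.card_range _
        _ ≤ k + 1 := hmk
    · push_neg at hmk
      have hkm : k + 1 ≤ m := by omega
      have hmlt : m < n := hmn
      set v : Fin n := ⟨m, hmlt⟩ with hv
      by_cases hvW : v ∈ W
      · obtain ⟨S, hScard, hSlt, hchar, -⟩ := hstep v (by simpa [hv] using hkm)
        have hsub : W.erase v ⊆ S := by
          intro w hw
          obtain ⟨hwne, hwW⟩ := Finset.mem_erase.mp hw
          have hwm : (w : ℕ) < m := by
            rcases Nat.lt_succ_iff_lt_or_eq.mp (hW w hwW) with h | h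
            · exact h
            · exact absurd (show w = v from Fin.ext h) hwne
          exact (hchar w hwm).mp (hclq w hwW v hvW hwne)
        have h1 := Finset.card_erase_add_one hvW
        have h2 := Finset.card_le_card hsub
        omega
      · apply ih (le_of_lt hmn) W _ hclq
        intro w hw
        rcases Nat.lt_succ_iff_lt_or_eq.mp (hW w hw) with h | h
        · exact h
        · exact absurd hw (by rw [show w = v from Fin.ext h]; exact hvW)

include hbase hstep in
lemma core_lemma : ∀ m : ℕ, k + 1 ≤ m → m ≤ n → ∀ W : Finset (Fin n), W.Nonempty →
    (∀ w ∈ W, (w : ℕ) < m) → (∀ a ∈ W, ∀ b ∈ W, a ≠ b → H.Adj a b) →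
    ∃ w ∈ W, min (k + W.card - 1) (m - 1) ≤ Dm H m w := by
  intro m hm
  induction m, hm using Nat.le_induction with
  | base =>
    intro hkn W hne hW hclq
    obtain ⟨w, hw⟩ := hne
    refine ⟨w, hw, ?_⟩
    have hwlt : (w : ℕ) < k + 1 := hW w hw
    have hsub : ∀ t ∈ (Finset.univ.filter fun j : Fin n => (j : ℕ) < k + 1).erase w,
        (t : ℕ) < k + 1 ∧ H.Adj w t := by
      intro j hj
      obtain ⟨hjne, hjlt⟩ := Finset.mem_erase.mp hj
      simp only [Finset.mem_filter, Finset.mem_univ, true_and] at hjlt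
      refine ⟨hjlt, ?_⟩
      rcases lt_trichotomy j w with h | h | h
      · exact (hbase j w h hwlt).symm
      · exact absurd h hjne
      · exact hbase w j h hjlt
    have hD := le_Dm_of_subset hsub
    rw [Finset.card_erase_of_mem (by simp [hwlt]; omega), card_filter_val_lt (k+1) hkn] at hD
    have hc : 1 ≤ W.card := Finset.card_pos.mpr ⟨w, hw⟩
    omega
  | succ m hkm ih =>
    intro hm1n W hne hW hclq
    have hmn : m ≤ n := by omega
    have hmlt : m < n := hm1n
    set v : Fin n := ⟨m, hmlt⟩ with hv
    obtain ⟨S, hScard, hSlt, hchar, hSclq⟩ := hstep v (by simpa [hv] using hkm)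
    have hSm : ∀ s ∈ S, (s : ℕ) < m := fun s hs => hSlt s hs
    have hSadj : ∀ s ∈ S, H.Adj s v := fun s hs => (hchar s (hSlt s hs)).mpr hs
    have hWcard : 1 ≤ W.card := Finset.card_pos.mpr hne
    by_cases hvW : v ∈ W
    · -- case A : v ∈ W
      by_cases hq1 : (W.erase v).Nonempty
      · have hW' : ∀ w ∈ W.erase v, (w : ℕ) < m := by
          intro w hw
          obtain ⟨hwne, hwW⟩ := Finset.mem_erase.mp hw
          rcases Nat.lt_succ_iff_lt_or_eq.mp (hW w hwW) with h | h
          · exact h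
          · exact absurd (show w = v from Fin.ext h) hwne
        obtain ⟨w, hwW', hwD⟩ := ih hmn (W.erase v) hq1 hW'
          (fun a ha b hb hab =>
            hclq a (Finset.mem_of_mem_erase ha) b (Finset.mem_of_mem_erase hb) hab)
        obtain ⟨hwne, hwW⟩ := Finset.mem_erase.mp hwW'
        have hadj : H.Adj w v := hclq w hwW v hvW hwne
        have hstep2 : Dm H m w + 1 ≤ Dm H (m + 1) w := Dm_succ H hmlt hadj
        have hcard := Finset.card_erase_add_one hvW
        have hc' : 1 ≤ (W.erase v).card := Finset.card_pos.mpr hq1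
        exact ⟨w, hwW, by omega⟩
      · -- W = {v}
        have h1 : (W.erase v).card = 0 := by
          rw [Finset.not_nonempty_iff_eq_empty.mp hq1]; exact Finset.card_empty
        have h2 := Finset.card_erase_add_one hvW
        refine ⟨v, hvW, ?_⟩
        have hD := le_Dm_of_subset (T := S) (H := H) (m := m + 1) (i := v)
          (fun s hs => ⟨Nat.lt_succ_of_lt (hSm s hs), (hSadj s hs).symm⟩)
        rw [hScard] at hD
        omega
    · -- case B : v ∉ W
      have hWm : ∀ w ∈ W, (w : ℕ) < m := by
        intro w hw
        rcases Nat.lt_succ_iff_lt_or_eq.mp (hW w hw) with h | h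
        · exact h
        · exact absurd hw (by rw [show w = v from Fin.ext h]; exact hvW)
      by_cases hcase : k + W.card - 1 ≤ m - 1
      · obtain ⟨w, hwW, hwD⟩ := ih hmn W hne hWm hclq
        have hmono := Dm_mono H (by omega : m ≤ m + 1) w
        exact ⟨w, hwW, by omega⟩
      · have hq : m + 1 ≤ k + W.card := by omega
        set B : Finset (Fin n) := W.filter (fun w => Dm H m w + 2 ≤ m) with hB
        have hBsub : B ⊆ W := Finset.filter_subset _ _
        have hBcard : B.card ≤ m - k - 1 := by
          by_contra hcon
          push_neg at hcon
          have h2 : m - k ≤ B.card := by omega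
          obtain ⟨B₀, hB₀sub, hB₀card⟩ := Finset.exists_subset_card_eq h2
          have hB₀ne : B₀.Nonempty := Finset.card_pos.mp (by omega)
          obtain ⟨w, hwB₀, hwD⟩ := ih hmn B₀ hB₀ne
            (fun w hw => hWm w (hBsub (hB₀sub hw)))
            (fun a ha b hb hab => hclq a (hBsub (hB₀sub ha)) b (hBsub (hB₀sub hb)) hab)
          have hwB : w ∈ B := hB₀sub hwB₀
          have hlow : Dm H m w + 2 ≤ m := (Finset.mem_filter.mp hwB).2
          rw [hB₀card] at hwD
          omega
        set U : Finset (Fin n) := W \ B with hU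
        have hUsub : U ⊆ W := Finset.sdiff_subset
        have hUcard : 2 ≤ U.card := by
          have hsd := Finset.card_sdiff_of_subset hBsub
          rw [← hU] at hsd
          have := Finset.card_le_card hBsub
          omega
        have hUuniv : ∀ u ∈ U, m - 1 ≤ Dm H m u := by
          intro u hu
          obtain ⟨huW, huB⟩ := Finset.mem_sdiff.mp hu
          have : ¬ (Dm H m u + 2 ≤ m) := fun hc => huB (Finset.mem_filter.mpr ⟨huW, hc⟩)
          omega
        have huniv : ∀ u ∈ U, ∀ j : Fin n, (j : ℕ) < m → j ≠ u → H.Adj u j := by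
          intro u hu j hjm hjne
          have huW : u ∈ W := hUsub hu
          have hum : (u : ℕ) < m := hWm u huW
          have h1 : m - 1 ≤ Dm H m u := hUuniv u hu
          have hsub : (Finset.univ.filter fun j : Fin n => (j : ℕ) < m ∧ H.Adj u j) ⊆
              (Finset.univ.filter fun j : Fin n => (j : ℕ) < m).erase u := by
            intro x hx
            simp only [Finset.mem_filter, Finset.mem_univ, true_and] at hx
            exact Finset.mem_erase.mpr ⟨hx.2.ne', by simp [hx.1]⟩
          have hcarde : ((Finset.univ.filter fun j : Fin n => (j : ℕ) < m).erase u).card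
              = m - 1 := by
            rw [Finset.card_erase_of_mem (by simp [hum]), card_filter_val_lt m hmn]
          have hDmle : Dm H m u ≤ m - 1 := by
            have := Finset.card_le_card hsub
            rw [hcarde] at this
            exact this
          have heq := Finset.eq_of_subset_of_card_le hsub (by rw [hcarde]; exact h1)
          have hjmem : j ∈ (Finset.univ.filter fun j : Fin n => (j : ℕ) < m).erase u :=
            Finset.mem_erase.mpr ⟨hjne, by simp [hjm]⟩
          rw [← heq] at hjmem
          exact (Finset.mem_filter.mp hjmem).2.2
        have hexS : ∃ u ∈ U, u ∈ S := by
          by_contra hcon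
          push_neg at hcon
          obtain ⟨u1, hu1, u2, hu2, hne12⟩ := Finset.one_lt_card.mp (by omega : 1 < U.card)
          set C2 : Finset (Fin n) := insert u1 (insert u2 S) with hC2
          have hC2card : C2.card = k + 2 := by
            rw [hC2, Finset.card_insert_of_notMem, Finset.card_insert_of_notMem (hcon u2 hu2),
              hScard]
            simp only [Finset.mem_insert]
            push_neg
            exact ⟨hne12, hcon u1 hu1⟩
          have hC2lt : ∀ w ∈ C2, (w : ℕ) < m := by
            intro w hw
            rcases Finset.mem_insert.mp hw with rfl | hw'
            · exact hWm w (hUsub hu1)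
            rcases Finset.mem_insert.mp hw' with rfl | hw''
            · exact hWm w (hUsub hu2)
            · exact hSm w hw''
          have hC2clq : ∀ a ∈ C2, ∀ b ∈ C2, a ≠ b → H.Adj a b := by
            intro a ha b hb hab
            rcases Finset.mem_insert.mp ha with rfl | ha'
            · exact huniv a hu1 b (hC2lt b hb) (Ne.symm hab)
            rcases Finset.mem_insert.mp ha' with rfl | haS
            · exact huniv a hu2 b (hC2lt b hb) (Ne.symm hab)
            · rcases Finset.mem_insert.mp hb with rfl | hb'
              · exact (huniv b hu1 a (hSm a haS) hab).symm
              rcases Finset.mem_insert.mp hb' with rfl | hbS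
              · exact (huniv b hu2 a (hSm a haS) hab).symm
              · exact hSclq a haS b hbS hab
          have := clique_le hstep m hmn C2 hC2lt hC2clq
          omega
        obtain ⟨u, huU, huS⟩ := hexS
        have huW : u ∈ W := hUsub huU
        have h1 : m - 1 ≤ Dm H m u := hUuniv u huU
        have h2 := Dm_succ H hmlt (hSadj u huS)
        exact ⟨u, huW, by omega⟩
end Core

lemma degN_eq_Dm {V : Type*} [Fintype V] {n : ℕ} (G : SimpleGraph V) (e : V ≃ Fin n) (x : V) :
    degN G x = Dm (G.comap (e.symm : Fin n → V)) n (e x) := by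
  have h1 : degN G x = Nat.card {j : Fin n // G.Adj x (e.symm j)} := by
    unfold degN
    rw [Set.ncard_eq_toFinset_card']
    rw [Set.toFinset_card]
    rw [← Nat.card_eq_fintype_card]
    exact Nat.card_congr (e.subtypeEquiv (fun y => by simp [SimpleGraph.neighborSet]))
  rw [h1, Nat.card_eq_fintype_card, Fintype.card_subtype]
  unfold Dm
  congr 1
  ext j
  simp [SimpleGraph.comap, j.isLt]

/-- Let `G` be a `k`-tree on `n` vertices and let `u 0, …, u (q-1)` be a
clique of `G` ordered by degree (0-indexed; vertex `u i` is the `(i+1)`-st in the ordering).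
If `n ≥ k + q` then `deg (u i) ≥ k + i` for all `i`. Otherwise `n ≤ k + q - 1`, and
`deg (u i) ≥ k + i` whenever `i + 1 ≤ n - k - 1`, while `deg (u i) ≥ n - 1` whenever
`n - k ≤ i + 1`. -/
theorem stmt7 {V : Type*} [Fintype V] (k q : ℕ) (G : SimpleGraph V)
    (hG : IsKTree k G)
    (u : Fin q → V) (hinj : Function.Injective u)
    (hclique : ∀ i j : Fin q, i ≠ j → G.Adj (u i) (u j))
    (hord : ∀ i j : Fin q, i ≤ j → degN G (u i) ≤ degN G (u j)) :
    (k + q ≤ Fintype.card V → ∀ i : Fin q, k + (i : ℕ) ≤ degN G (u i)) ∧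
    (Fintype.card V ≤ k + q - 1 →
      ∀ i : Fin q,
        ((i : ℕ) + 1 + k + 1 ≤ Fintype.card V → k + (i : ℕ) ≤ degN G (u i)) ∧
        (Fintype.card V ≤ (i : ℕ) + 1 + k → Fintype.card V - 1 ≤ degN G (u i))) := by
  classical
  obtain ⟨n, e, hkn, hbase, hstep⟩ := hG
  set H : SimpleGraph (Fin n) := G.comap (e.symm : Fin n → V) with hH
  have hcard : Fintype.card V = n := by rw [Fintype.card_congr e, Fintype.card_fin]
  have key : ∀ i : Fin q, min (k + (i : ℕ)) (n - 1) ≤ degN G (u i) := by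
    intro i
    set W : Finset (Fin n) := (Finset.Iic i).image (fun j => e (u j)) with hW
    have hWcard : W.card = (i : ℕ) + 1 := by
      rw [hW, Finset.card_image_of_injective _ (fun a b hab => hinj (e.injective hab)),
        Fin.card_Iic]
    have hne : W.Nonempty := ⟨e (u i), Finset.mem_image.mpr ⟨i, Finset.mem_Iic.mpr le_rfl, rfl⟩⟩
    have hWclq : ∀ a ∈ W, ∀ b ∈ W, a ≠ b → H.Adj a b := by
      intro a ha b hb hab
      obtain ⟨j1, -, rfl⟩ := Finset.mem_image.mp ha
      obtain ⟨j2, -, rfl⟩ := Finset.mem_image.mp hb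
      have hj : j1 ≠ j2 := by rintro rfl; exact hab rfl
      show G.Adj (e.symm (e (u j1))) (e.symm (e (u j2)))
      simpa using hclique j1 j2 hj
    obtain ⟨w, hwW, hwD⟩ := core_lemma hbase hstep n hkn le_rfl W hne
      (fun w _ => w.isLt) hWclq
    obtain ⟨j, hj, rfl⟩ := Finset.mem_image.mp hwW
    have hdeg : degN G (u j) = Dm H n (e (u j)) := degN_eq_Dm G e (u j)
    have hord' := hord j i (Finset.mem_Iic.mp hj)
    rw [hWcard] at hwD
    have hji : (j : ℕ) ≤ (i : ℕ) := Fin.le_def.mp (Finset.mem_Iic.mp hj)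
    have : min (k + (i : ℕ)) (n - 1) ≤ degN G (u j) := by rw [hdeg]; omega
    omega
  rw [hcard]
  constructor
  · intro hn i
    have h := key i
    have := i.isLt
    omega
  · intro hn2 i
    have h := key i
    constructor
    · intro h1; omega
    · intro h2; omega
end

section
/- For all integers 1 ≤ k ≤ ℓ ≤ 2k, and for every k-tree G on n ≥ ℓ+2 vertices, the subgraph G_ℓ of G induced by the set of vertices of degree at most ℓ has treewidth at most ℓ-k. -/
namespace Stmt8Aux

attribute [local instance] Classical.propDecidable

/-- An ordered `k`-tree structure on `{0,...,n-1}` as a relation on `ℕ`. -/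
structure OKT (k n : ℕ) (adj : ℕ → ℕ → Prop) : Prop where
  symm : ∀ {a b}, adj a b → adj b a
  irrefl : ∀ a, ¬ adj a a
  ltn : ∀ {a b}, adj a b → a < n ∧ b < n
  kn : k + 1 ≤ n
  init : ∀ {i j}, i < j → j < k + 1 → adj i j
  step : ∀ j, k + 1 ≤ j → j < n → ∃ S : Finset ℕ, S.card = k ∧ (∀ i ∈ S, i < j) ∧
    (∀ i, i < j → (adj i j ↔ i ∈ S)) ∧ (∀ i ∈ S, ∀ i' ∈ S, i ≠ i' → adj i i')

/-- Degree counted among the first `m` vertices. -/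
noncomputable def deg (adj : ℕ → ℕ → Prop) (m a : ℕ) : ℕ :=
  ((Finset.range m).filter (fun b => adj a b)).card

lemma deg_eq_card_filter (adj : ℕ → ℕ → Prop) (m a : ℕ) :
    deg adj m a = ((Finset.range m).filter (fun b => adj a b)).card := rfl

variable {k n : ℕ} {adj : ℕ → ℕ → Prop}

lemma deg_mono (h : OKT k n adj) {m m' a : ℕ} (hm : m ≤ m') :
    deg adj m a ≤ deg adj m' a := by
  apply Finset.card_le_card
  exact Finset.filter_subset_filter _ (by simpa using hm)

lemma deg_succ (h : OKT k n adj) (m a : ℕ) :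
    deg adj (m + 1) a = deg adj m a + (if adj a m then 1 else 0) := by
  unfold deg
  rw [Finset.range_add_one, Finset.filter_insert]
  split
  · rw [Finset.card_insert_of_notMem (by simp)]
  · simp

lemma ne_of_adj (h : OKT k n adj) {a b : ℕ} (hab : adj a b) : a ≠ b := by
  rintro rfl; exact h.irrefl a hab

lemma deg_le (h : OKT k n adj) {m a : ℕ} (ha : a < m) : deg adj m a + 1 ≤ m := by
  have hsub : (Finset.range m).filter (fun b => adj a b) ⊆ (Finset.range m).erase a := by
    intro b hb
    simp only [Finset.mem_filter, Finset.mem_range] at hb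
    exact Finset.mem_erase.2 ⟨fun hba => h.irrefl a (hba ▸ hb.2), by simp [hb.1]⟩
  have := Finset.card_le_card hsub
  rw [Finset.card_erase_of_mem (by simp [ha]), Finset.card_range] at this
  unfold deg; omega

/-- A vertex of full degree among the first `m` is adjacent to all of them. -/
lemma univ_adj (h : OKT k n adj) {m a : ℕ} (ha : a < m) (hd : deg adj m a + 1 = m)
    {b : ℕ} (hb : b < m) (hba : b ≠ a) : adj a b := by
  have hsub : (Finset.range m).filter (fun b => adj a b) ⊆ (Finset.range m).erase a := by
    intro b hb
    simp only [Finset.mem_filter, Finset.mem_range] at hb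
    exact Finset.mem_erase.2 ⟨fun hba => h.irrefl a (hba ▸ hb.2), by simp [hb.1]⟩
  have hcard : ((Finset.range m).erase a).card ≤ ((Finset.range m).filter (fun b => adj a b)).card := by
    rw [Finset.card_erase_of_mem (by simp [ha]), Finset.card_range]
    unfold deg at hd; omega
  have := Finset.eq_of_subset_of_card_le hsub hcard
  have hbmem : b ∈ (Finset.range m).erase a := Finset.mem_erase.2 ⟨hba, by simp [hb]⟩
  rw [← this] at hbmem
  exact (Finset.mem_filter.1 hbmem).2

/-- cliques -/
def IsCl (adj : ℕ → ℕ → Prop) (C : Finset ℕ) : Prop :=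
  ∀ a ∈ C, ∀ b ∈ C, a ≠ b → adj a b

/-- No clique has more than `k+1` vertices. -/
lemma clique_le (h : OKT k n adj) :
    ∀ m, m ≤ n → ∀ C : Finset ℕ, C ⊆ Finset.range m → IsCl adj C → C.card ≤ k + 1 := by
  intro m
  induction m with
  | zero => intro _ C hC _; simp [Finset.subset_empty.1 (by simpa using hC)]
  | succ m ih =>
    intro hmn C hC hcl
    by_cases hmk : m + 1 ≤ k + 1
    · calc C.card ≤ (Finset.range (m+1)).card := Finset.card_le_card hC
        _ ≤ k + 1 := by simpa using hmk
    · have hkm : k + 1 ≤ m := by omega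
      by_cases hmC : m ∈ C
      · obtain ⟨S, hScard, hSlt, hSiff, _⟩ := h.step m hkm (by omega)
        have : C.erase m ⊆ S := by
          intro a ha
          obtain ⟨ham, haC⟩ := Finset.mem_erase.1 ha
          have halt : a < m := by
            have := hC haC; simp only [Finset.mem_range] at this; omega
          exact (hSiff a halt).1 (hcl a haC m hmC ham)
        have h1 : (C.erase m).card ≤ k := hScard ▸ Finset.card_le_card this
        have := Finset.card_erase_of_mem hmC
        omega
      · apply ih (by omega) C _ hcl
        intro a ha
        have := hC ha; simp only [Finset.mem_range] at this ⊢
        rcases Nat.lt_succ_iff_lt_or_eq.1 this with h' | rfl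
        · exact h'
        · exact absurd ha hmC

/-- two non-`S` universal vertices coincide -/
lemma univ_out (h : OKT k n adj) {m : ℕ} (hkm : k + 1 ≤ m) (hmn : m < n)
    {S : Finset ℕ} (hScard : S.card = k) (hSlt : ∀ i ∈ S, i < m)
    (hSiff : ∀ i, i < m → (adj i m ↔ i ∈ S)) (hScl : ∀ i ∈ S, ∀ i' ∈ S, i ≠ i' → adj i i')
    {a b : ℕ} (ha : a < m) (hb : b < m)
    (hua : deg adj m a + 1 = m) (hub : deg adj m b + 1 = m)
    (haS : a ∉ S) (hbS : b ∉ S) : a = b := by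
  by_contra hab
  have hcl : IsCl adj (insert a (insert b S)) := by
    intro x hx y hy hxy
    simp only [Finset.mem_insert] at hx hy
    rcases hx with rfl | rfl | hx <;> rcases hy with rfl | rfl | hy
    · omega
    · exact univ_adj h ha hua hb (by omega)
    · exact univ_adj h ha hua (hSlt _ hy) (fun hc => haS (hc ▸ hy))
    · exact univ_adj h hb hub ha (by omega)
    · omega
    · exact univ_adj h hb hub (hSlt _ hy) (fun hc => hbS (hc ▸ hy))
    · exact h.symm (univ_adj h ha hua (hSlt _ hx) (fun hc => haS (hc ▸ hx)))
    · exact h.symm (univ_adj h hb hub (hSlt _ hx) (fun hc => hbS (hc ▸ hx)))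
    · exact hScl _ hx _ hy hxy
  have hsub : insert a (insert b S) ⊆ Finset.range m := by
    intro x hx
    simp only [Finset.mem_insert] at hx
    rcases hx with rfl | rfl | hx
    · simp [ha]
    · simp [hb]
    · simp [hSlt _ hx]
  have hcard : (insert a (insert b S)).card = k + 2 := by
    rw [Finset.card_insert_of_notMem, Finset.card_insert_of_notMem hbS, hScard]
    simp only [Finset.mem_insert]
    push_neg
    exact ⟨hab, haS⟩
  have := clique_le h m (by omega) _ hsub hcl
  omega


/-- Lemma M: every clique contains many universal vertices. -/
lemma many_univ (h : OKT k n adj) :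
    ∀ m, k + 1 ≤ m → m ≤ n → ∀ C : Finset ℕ, C ⊆ Finset.range m → IsCl adj C →
      C.card ≤ (m - (k + 1)) + (C.filter (fun a => deg adj m a + 1 = m)).card := by
  intro m hm
  induction m, hm using Nat.le_induction with
  | base =>
    intro hmn C hC hcl
    have : C.filter (fun a => deg adj (k+1) a + 1 = k + 1) = C := by
      apply Finset.filter_true_of_mem
      intro a haC
      have ha : a < k + 1 := by have := hC haC; simpa using this
      have : (Finset.range (k+1)).filter (fun b => adj a b) = (Finset.range (k+1)).erase a := by
        ext b
        simp only [Finset.mem_filter, Finset.mem_erase, Finset.mem_range]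
        constructor
        · rintro ⟨hb, hab⟩; exact ⟨fun hba => h.irrefl a (hba ▸ hab), hb⟩
        · rintro ⟨hba, hb⟩
          refine ⟨hb, ?_⟩
          rcases Nat.lt_or_ge a b with h' | h'
          · exact h.init h' hb
          · exact h.symm (h.init (by omega) ha)
      unfold deg
      rw [this, Finset.card_erase_of_mem (by simp [ha]), Finset.card_range]
      omega
    rw [this]; omega
  | succ m hkm ih =>
    intro hmn C hC hcl
    obtain ⟨S, hScard, hSlt, hSiff, hScl⟩ := h.step m hkm (by omega)
    -- membership in S gives degree bump
    have hbump : ∀ a, a < m → adj a m → deg adj (m+1) a = deg adj m a + 1 := by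
      intro a ha ham
      rw [deg_succ h, if_pos ham]
    by_cases hmC : m ∈ C
    · -- use C' = C.erase m
      have hC' : C.erase m ⊆ Finset.range m := by
        intro a ha
        obtain ⟨ham, haC⟩ := Finset.mem_erase.1 ha
        have := hC haC; simp only [Finset.mem_range] at this ⊢; omega
      have hcl' : IsCl adj (C.erase m) := fun a ha b hb hab =>
        hcl a (Finset.mem_of_mem_erase ha) b (Finset.mem_of_mem_erase hb) hab
      have hIH := ih (by omega) (C.erase m) hC' hcl'
      have hsub : (C.erase m).filter (fun a => deg adj m a + 1 = m) ⊆
          C.filter (fun a => deg adj (m+1) a + 1 = m+1) := by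
        intro a ha
        simp only [Finset.mem_filter, Finset.mem_erase] at ha ⊢
        obtain ⟨⟨ham, haC⟩, hd⟩ := ha
        have halt : a < m := by have := hC' (Finset.mem_erase.2 ⟨ham, haC⟩); simpa using this
        have hadj : adj a m := hcl a haC m hmC ham
        refine ⟨haC, ?_⟩
        rw [hbump a halt hadj]; omega
      have := Finset.card_le_card hsub
      have hce := Finset.card_erase_of_mem hmC
      have hCpos : 1 ≤ C.card := Finset.card_pos.2 ⟨m, hmC⟩
      omega
    · -- C ⊆ range m
      have hCm : C ⊆ Finset.range m := by
        intro a ha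
        have := hC ha; simp only [Finset.mem_range] at this ⊢
        rcases Nat.lt_succ_iff_lt_or_eq.1 this with h' | rfl
        · exact h'
        · exact absurd ha hmC
      have hIH := ih (by omega) C hCm hcl
      -- split the universal vertices at level m by membership in S
      have hsplit : C.filter (fun a => deg adj m a + 1 = m) ⊆
          (C.filter (fun a => (deg adj m a + 1 = m) ∧ a ∈ S)) ∪
          (C.filter (fun a => (deg adj m a + 1 = m) ∧ a ∉ S)) := by
        intro a ha
        simp only [Finset.mem_filter, Finset.mem_union] at ha ⊢
        tauto
      have hout : (C.filter (fun a => (deg adj m a + 1 = m) ∧ a ∉ S)).card ≤ 1 := by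
        apply Finset.card_le_one.2
        intro a ha b hb
        simp only [Finset.mem_filter] at ha hb
        exact univ_out h hkm (by omega) hScard hSlt hSiff hScl
          (by have := hCm ha.1; simpa using this) (by have := hCm hb.1; simpa using this)
          ha.2.1 hb.2.1 ha.2.2 hb.2.2
      have hin : (C.filter (fun a => (deg adj m a + 1 = m) ∧ a ∈ S)) ⊆
          C.filter (fun a => deg adj (m+1) a + 1 = m+1) := by
        intro a ha
        simp only [Finset.mem_filter] at ha ⊢
        obtain ⟨haC, hd, haS⟩ := ha
        have halt : a < m := by have := hCm haC; simpa using this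
        have hadj : adj a m := (hSiff a halt).2 haS
        refine ⟨haC, ?_⟩
        rw [hbump a halt hadj]; omega
      have h1 := Finset.card_le_card hsplit
      have h2 := Finset.card_union_le (C.filter (fun a => (deg adj m a + 1 = m) ∧ a ∈ S))
          (C.filter (fun a => (deg adj m a + 1 = m) ∧ a ∉ S))
      have h3 := Finset.card_le_card hin
      omega

/-- Lemma L: every nonempty clique has a vertex of degree ≥ min (k + |C| - 1) (m - 1). -/
lemma max_deg (h : OKT k n adj) :
    ∀ m, k + 1 ≤ m → m ≤ n → ∀ C : Finset ℕ, C ⊆ Finset.range m → IsCl adj C → C.Nonempty →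
      ∃ a ∈ C, min (k + C.card) m ≤ deg adj m a + 1 := by
  intro m hm
  induction m, hm using Nat.le_induction with
  | base =>
    intro hmn C hC hcl ⟨a, ha⟩
    refine ⟨a, ha, ?_⟩
    have halt : a < k + 1 := by have := hC ha; simpa using this
    have : (Finset.range (k+1)).filter (fun b => adj a b) = (Finset.range (k+1)).erase a := by
      ext b
      simp only [Finset.mem_filter, Finset.mem_erase, Finset.mem_range]
      constructor
      · rintro ⟨hb, hab⟩; exact ⟨fun hba => h.irrefl a (hba ▸ hab), hb⟩
      · rintro ⟨hba, hb⟩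
        refine ⟨hb, ?_⟩
        rcases Nat.lt_or_ge a b with h' | h'
        · exact h.init h' hb
        · exact h.symm (h.init (by omega) halt)
    unfold deg
    rw [this, Finset.card_erase_of_mem (by simp [halt]), Finset.card_range]
    have := min_le_right (k + C.card) (k+1)
    omega
  | succ m hkm ih =>
    intro hmn C hC hcl hCne
    obtain ⟨S, hScard, hSlt, hSiff, hScl⟩ := h.step m hkm (by omega)
    by_cases hmC : m ∈ C
    · by_cases hC' : (C.erase m).Nonempty
      · obtain ⟨a, haC', hda⟩ := ih (by omega) (C.erase m)
          (by intro x hx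
              obtain ⟨hxm, hxC⟩ := Finset.mem_erase.1 hx
              have := hC hxC; simp only [Finset.mem_range] at this ⊢; omega)
          (fun x hx y hy hxy => hcl x (Finset.mem_of_mem_erase hx) y (Finset.mem_of_mem_erase hy) hxy)
          hC'
        obtain ⟨ham, haC⟩ := Finset.mem_erase.1 haC'
        have halt : a < m := by
          have := hC haC; simp only [Finset.mem_range] at this; omega
        have hadj : adj a m := hcl a haC m hmC ham
        refine ⟨a, haC, ?_⟩
        rw [deg_succ h, if_pos hadj]
        have hce := Finset.card_erase_of_mem hmC
        have hCpos : 1 ≤ C.card := Finset.card_pos.2 ⟨m, hmC⟩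
        rcases Nat.le_total (k + (C.erase m).card) m with h' | h'
        · rw [min_eq_left h'] at hda
          rcases Nat.le_total (k + C.card) (m+1) with h'' | h''
          · rw [min_eq_left h'']; omega
          · rw [min_eq_right h'']; omega
        · rw [min_eq_right h'] at hda
          rcases Nat.le_total (k + C.card) (m+1) with h'' | h''
          · rw [min_eq_left h'']; omega
          · rw [min_eq_right h'']; omega
      · -- C = {m}
        have hCsing : C = {m} := by
          apply Finset.eq_singleton_iff_unique_mem.2
          refine ⟨hmC, fun x hx => ?_⟩
          by_contra hxm
          exact hC' ⟨x, Finset.mem_erase.2 ⟨hxm, hx⟩⟩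
        refine ⟨m, hmC, ?_⟩
        have hsub : S ⊆ (Finset.range (m+1)).filter (fun b => adj m b) := by
          intro s hs
          simp only [Finset.mem_filter, Finset.mem_range]
          have hslt := hSlt s hs
          exact ⟨by omega, h.symm ((hSiff s hslt).2 hs)⟩
        have := Finset.card_le_card hsub
        rw [hScard] at this
        unfold deg
        have hmin := min_le_left (k + C.card) (m+1)
        rw [hCsing]; simp only [Finset.card_singleton]
        have hmin2 : min (k + 1) (m + 1) ≤ k + 1 := min_le_left _ _
        omega
    · have hCm : C ⊆ Finset.range m := by
        intro a ha
        have := hC ha; simp only [Finset.mem_range] at this ⊢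
        rcases Nat.lt_succ_iff_lt_or_eq.1 this with h' | rfl
        · exact h'
        · exact absurd ha hmC
      rcases le_or_gt (k + C.card) m with hcase | hcase
      · obtain ⟨a, haC, hda⟩ := ih (by omega) C hCm hcl hCne
        refine ⟨a, haC, ?_⟩
        rw [min_eq_left hcase] at hda
        have : deg adj m a ≤ deg adj (m+1) a := deg_mono h (by omega)
        have : min (k + C.card) (m+1) ≤ k + C.card := min_le_left _ _
        omega
      · -- saturated case : use many_univ
        have hM := many_univ h m hkm (by omega) C hCm hcl
        have h2 : 2 ≤ (C.filter (fun a => deg adj m a + 1 = m)).card := by omega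
        -- find a universal vertex in S
        have : ∃ a ∈ C, deg adj m a + 1 = m ∧ a ∈ S := by
          by_contra hno
          push_neg at hno
          have : (C.filter (fun a => deg adj m a + 1 = m)).card ≤ 1 := by
            apply Finset.card_le_one.2
            intro a ha b hb
            simp only [Finset.mem_filter] at ha hb
            exact univ_out h hkm (by omega) hScard hSlt hSiff hScl
              (by have := hCm ha.1; simpa using this) (by have := hCm hb.1; simpa using this)
              ha.2 hb.2 (hno a ha.1 ha.2) (hno b hb.1 hb.2)
          omega
        obtain ⟨a, haC, hda, haS⟩ := this
        refine ⟨a, haC, ?_⟩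
        have halt : a < m := by have := hCm haC; simpa using this
        have hadj : adj a m := (hSiff a halt).2 haS
        rw [deg_succ h, if_pos hadj]
        have : min (k + C.card) (m+1) ≤ m + 1 := min_le_right _ _
        omega

/-- The main clique bound: any clique of low-degree vertices has at most `ℓ+1-k` vertices. -/
lemma clique_bound (h : OKT k n adj) {ℓ : ℕ} (hkl : k ≤ ℓ) (hn : ℓ + 2 ≤ n)
    {C : Finset ℕ} (hC : C ⊆ Finset.range n) (hcl : IsCl adj C)
    (hdeg : ∀ a ∈ C, deg adj n a ≤ ℓ) : C.card + k ≤ ℓ + 1 := by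
  rcases C.eq_empty_or_nonempty with rfl | hne
  · simp; omega
  obtain ⟨a, haC, hda⟩ := max_deg h n (by have := h.kn; omega) le_rfl C hC hcl hne
  have := hdeg a haC
  rcases Nat.le_total (k + C.card) n with h' | h'
  · rw [min_eq_left h'] at hda; omega
  · rw [min_eq_right h'] at hda; omega

/-- Back-neighbourhoods are cliques. -/
lemma back_clique (h : OKT k n adj) {i i' j : ℕ} (hii' : i < i') (hi'j : i' < j)
    (hij : adj i j) (hi'j' : adj i' j) : adj i i' := by
  rcases Nat.lt_or_ge j (k+1) with hj | hj
  · exact h.init hii' (by omega)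
  · obtain ⟨S, hScard, hSlt, hSiff, hScl⟩ := h.step j hj (h.ltn hij).2
    exact hScl i ((hSiff i (by omega)).1 hij) i' ((hSiff i' hi'j).1 hi'j') (by omega)

/-- Late vertices have low degree: vertex `a ≥ k+1` has degree at most `k + (n - 1 - a)`. -/
lemma late_deg (h : OKT k n adj) {a : ℕ} (ha : k + 1 ≤ a) (han : a < n) :
    deg adj n a ≤ k + (n - 1 - a) := by
  obtain ⟨S, hScard, hSlt, hSiff, hScl⟩ := h.step a ha han
  have hsub : (Finset.range n).filter (fun b => adj a b) ⊆ S ∪ Finset.Ico (a+1) n := by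
    intro b hb
    simp only [Finset.mem_filter, Finset.mem_range] at hb
    obtain ⟨hbn, hab⟩ := hb
    simp only [Finset.mem_union, Finset.mem_Ico]
    rcases Nat.lt_trichotomy b a with h' | rfl | h'
    · exact Or.inl ((hSiff b h').1 (h.symm hab))
    · exact absurd hab (h.irrefl _)
    · exact Or.inr ⟨h', hbn⟩
  have := Finset.card_le_card hsub
  have h2 := Finset.card_union_le S (Finset.Ico (a+1) n)
  rw [hScard, Nat.card_Ico] at h2
  unfold deg
  omega


/-- Builder: given back-neighbourhood data `B` that is small, hereditary-clique, and downward,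
we can construct parent sets `T` defining an ordered `d`-tree containing all `B`-edges. -/
theorem builder (d : ℕ) (B : ℕ → Finset ℕ)
    (hB1 : ∀ j, ∀ i ∈ B j, i < j) (hB2 : ∀ j, (B j).card ≤ d)
    (hB3 : ∀ j i i', i ∈ B j → i' ∈ B j → i < i' → i ∈ B i') :
    ∀ M, ∃ T : ℕ → Finset ℕ,
      (∀ j, j < M → j ≤ d → T j = Finset.range j) ∧
      (∀ j, j < M → d < j → (T j).card = d) ∧
      (∀ j, j < M → ∀ i ∈ T j, i < j) ∧
      (∀ j, j < M → B j ⊆ T j) ∧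
      (∀ j, j < M → ∀ i ∈ T j, ∀ i' ∈ T j, i < i' → i ∈ T i') := by
  intro M
  induction M with
  | zero => exact ⟨fun _ => ∅, by simp, by simp, by simp, by simp, by simp⟩
  | succ M ih =>
    obtain ⟨T, h1, h2, h3, h4, h5⟩ := ih
    -- find the new parent set E for index M
    have hE : ∃ E : Finset ℕ, (M ≤ d → E = Finset.range M) ∧ (d < M → E.card = d) ∧
        (∀ i ∈ E, i < M) ∧ B M ⊆ E ∧ (∀ i ∈ E, ∀ i' ∈ E, i < i' → i ∈ T i') := by
      rcases le_or_gt M d with hMd | hMd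
      · refine ⟨Finset.range M, fun _ => rfl, by omega, by simp, fun i hi => by
          simpa using hB1 M i hi, ?_⟩
        intro i hi i' hi' hii'
        simp only [Finset.mem_range] at hi hi'
        rw [h1 i' (by omega) (by omega)]
        simpa using hii'
      · -- padding: find a (d+1)-element T-clique F below M containing B M
        have hQcl : ∀ i ∈ B M, ∀ i' ∈ B M, i < i' → i ∈ T i' := by
          intro i hi i' hi' hii'
          exact h4 i' (hB1 M i' hi') (hB3 M i i' hi hi' hii')
        have hF : ∃ F : Finset ℕ, B M ⊆ F ∧ F.card = d + 1 ∧ (∀ i ∈ F, i < M) ∧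
            (∀ i ∈ F, ∀ i' ∈ F, i < i' → i ∈ T i') := by
          by_cases hq : ∃ q ∈ B M, d < q
          · obtain ⟨q0, hq0, hq0d⟩ := hq
            have hQne : (B M).Nonempty := ⟨q0, hq0⟩
            set q := (B M).max' hQne with hqdef
            have hqQ : q ∈ B M := (B M).max'_mem hQne
            have hdq : d < q := lt_of_lt_of_le hq0d ((B M).le_max' q0 hq0)
            have hqM : q < M := hB1 M q hqQ
            refine ⟨insert q (T q), ?_, ?_, ?_, ?_⟩
            · intro i hi
              rcases Nat.eq_or_lt_of_le ((B M).le_max' i hi) with h' | h'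
              · simp [h', hqdef]
              · exact Finset.mem_insert_of_mem (hQcl i hi q hqQ h')
            · rw [Finset.card_insert_of_notMem (fun hc => by
                have := h3 q hqM q hc; omega), h2 q hqM hdq]
            · intro i hi
              rcases Finset.mem_insert.1 hi with rfl | hi
              · exact hqM
              · have := h3 q hqM i hi; omega
            · intro i hi i' hi' hii'
              rcases Finset.mem_insert.1 hi' with rfl | hi'
              · rcases Finset.mem_insert.1 hi with rfl | hi
                · omega
                · exact hi
              · rcases Finset.mem_insert.1 hi with rfl | hi
                · have := h3 q hqM i' hi'; omega
                · exact h5 q hqM i hi i' hi' hii'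
          · push_neg at hq
            refine ⟨Finset.range (d + 1), ?_, by simp, ?_, ?_⟩
            · intro i hi
              simp only [Finset.mem_range]
              have := hq i hi; omega
            · intro i hi; simp only [Finset.mem_range] at hi; omega
            · intro i hi i' hi' hii'
              simp only [Finset.mem_range] at hi hi'
              rw [h1 i' (by omega) (by omega)]
              simpa using hii'
        obtain ⟨F, hQF, hFcard, hFlt, hFcl⟩ := hF
        obtain ⟨E, hQE, hEF, hEcard⟩ := Finset.exists_subsuperset_card_eq (n := d - (B M).card + (B M).card)
          hQF (by omega) (by rw [hFcard]; have := hB2 M; omega)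
        refine ⟨E, by omega, fun _ => by rw [hEcard]; have := hB2 M; omega,
          fun i hi => hFlt i (hEF hi), hQE, fun i hi i' hi' => hFcl i (hEF hi) i' (hEF hi')⟩
    obtain ⟨E, hE1, hE2, hE3, hE4, hE5⟩ := hE
    refine ⟨Function.update T M E, ?_, ?_, ?_, ?_, ?_⟩
    · intro j hj hjd
      rcases Nat.lt_succ_iff_lt_or_eq.1 hj with hj | rfl
      · rw [Function.update_of_ne (by omega)]; exact h1 j hj hjd
      · rw [Function.update_self]; exact hE1 hjd
    · intro j hj hjd
      rcases Nat.lt_succ_iff_lt_or_eq.1 hj with hj | rfl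
      · rw [Function.update_of_ne (by omega)]; exact h2 j hj hjd
      · rw [Function.update_self]; exact hE2 hjd
    · intro j hj i hi
      rcases Nat.lt_succ_iff_lt_or_eq.1 hj with hj | rfl
      · rw [Function.update_of_ne (by omega)] at hi; exact h3 j hj i hi
      · rw [Function.update_self] at hi; exact hE3 i hi
    · intro j hj
      rcases Nat.lt_succ_iff_lt_or_eq.1 hj with hj | rfl
      · rw [Function.update_of_ne (by omega)]; exact h4 j hj
      · rw [Function.update_self]; exact hE4
    · intro j hj i hi i' hi' hii'
      rcases Nat.lt_succ_iff_lt_or_eq.1 hj with hj | rfl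
      · rw [Function.update_of_ne (by omega)] at hi hi'
        rw [Function.update_of_ne (by have := h3 j hj i' hi'; omega)]
        exact h5 j hj i hi i' hi' hii'
      · rw [Function.update_self] at hi hi'
        rw [Function.update_of_ne (by have := hE3 i' hi'; omega)]
        exact hE5 i hi i' hi' hii'

end Stmt8Aux

open Stmt8Aux

/-- For all integers `1 ≤ k ≤ ℓ ≤ 2k` and every `k`-tree `G` on `n ≥ ℓ+2`
vertices, the subgraph of `G` induced by the vertices of degree at most `ℓ` has treewidth
at most `ℓ - k`. -/
theorem stmt8 {V : Type*} [Fintype V] (k ℓ : ℕ) (hk : 1 ≤ k) (hkl : k ≤ ℓ) (hl : ℓ ≤ 2 * k)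
    (G : SimpleGraph V) (hG : IsKTree k G) (hn : ℓ + 2 ≤ Fintype.card V) :
    treewidth (G.induce {v : V | degN G v ≤ ℓ}) ≤ ℓ - k := by
  classical
  obtain ⟨n, e, hkn, hinit, hstep⟩ := hG
  have hn' : ℓ + 2 ≤ n := by
    rwa [show Fintype.card V = n by rw [Fintype.card_congr e, Fintype.card_fin]] at hn
  set W : Set V := {v : V | degN G v ≤ ℓ} with hWdef
  set d : ℕ := ℓ - k with hd
  -- the ℕ-level adjacency relation
  set adj : ℕ → ℕ → Prop := fun a b =>
    ∃ (ha : a < n) (hb : b < n), G.Adj (e.symm ⟨a, ha⟩) (e.symm ⟨b, hb⟩) with hadjdef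
  have hOKT : OKT k n adj := by
    constructor
    · rintro a b ⟨ha, hb, h⟩; exact ⟨hb, ha, h.symm⟩
    · rintro a ⟨ha, hb, h⟩; exact G.loopless.irrefl _ h
    · rintro a b ⟨ha, hb, h⟩; exact ⟨ha, hb⟩
    · exact hkn
    · intro i j hij hjk
      have hjn : j < n := by omega
      have hin : i < n := by omega
      exact ⟨hin, hjn, hinit ⟨i, hin⟩ ⟨j, hjn⟩ (by simpa using hij) (by simpa using hjk)⟩
    · intro j hj hjn
      obtain ⟨S, hc, hlt, hiff, hcl⟩ := hstep ⟨j, hjn⟩ (by simpa using hj)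
      refine ⟨S.image Fin.val, ?_, ?_, ?_, ?_⟩
      · rw [Finset.card_image_of_injective _ Fin.val_injective, hc]
      · intro i hi
        obtain ⟨x, hx, rfl⟩ := Finset.mem_image.1 hi
        exact hlt x hx
      · intro i hij'
        have hin : i < n := by omega
        constructor
        · rintro ⟨_, _, h⟩
          exact Finset.mem_image_of_mem _
            ((hiff ⟨i, hin⟩ (by simpa using hij')).1 h)
        · intro hi
          obtain ⟨x, hx, hxv⟩ := Finset.mem_image.1 hi
          have hx' : (⟨i, hin⟩ : Fin n) ∈ S := by
            have : x = ⟨i, hin⟩ := Fin.ext hxv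
            rwa [this] at hx
          exact ⟨hin, hjn, (hiff ⟨i, hin⟩ (by simpa using hij')).2 hx'⟩
      · intro a ha b hb hab
        obtain ⟨x, hx, rfl⟩ := Finset.mem_image.1 ha
        obtain ⟨y, hy, rfl⟩ := Finset.mem_image.1 hb
        exact ⟨x.isLt, y.isLt, by
          have := hcl x hx y hy (fun hc => hab (congrArg Fin.val hc))
          simpa using this⟩
  -- link between degrees in `G` and `adj`-degrees
  have hsymmk : ∀ (u : V) (h : (e u).val < n), e.symm ⟨(e u).val, h⟩ = u := by
    intro u h
    rw [Fin.eta]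
    exact e.symm_apply_apply u
  have hadjG : ∀ u v : V, G.Adj u v ↔ adj (e u).val (e v).val := by
    intro u v
    constructor
    · intro h'
      exact ⟨(e u).isLt, (e v).isLt, by rwa [hsymmk, hsymmk]⟩
    · rintro ⟨ha, hb, h'⟩
      rwa [hsymmk, hsymmk] at h'
  have hdeglink : ∀ v : V, degN G v = deg adj n (e v).val := by
    intro v
    rw [degN, Set.ncard_eq_toFinset_card', deg_eq_card_filter]
    apply Finset.card_bij (fun (x : V) _ => (e x).val)
    · intro a ha
      rw [Set.mem_toFinset, SimpleGraph.mem_neighborSet] at ha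
      simp only [Finset.mem_filter, Finset.mem_range]
      exact ⟨(e a).isLt, (hadjG v a).1 ha⟩
    · intro a _ b _ hab
      exact e.injective (Fin.val_injective hab)
    · intro b hb
      simp only [Finset.mem_filter, Finset.mem_range] at hb
      obtain ⟨hbn, hA⟩ := hb
      refine ⟨e.symm ⟨b, hbn⟩, ?_, by simp⟩
      rw [Set.mem_toFinset, SimpleGraph.mem_neighborSet]
      apply (hadjG v (e.symm ⟨b, hbn⟩)).2
      rw [Equiv.apply_symm_apply]
      exact hA
  -- the set of low-degree vertices inside `Fin n`
  set Wfin : Finset (Fin n) :=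
    Finset.univ.filter (fun x : Fin n => deg adj n x.val ≤ ℓ) with hWfindef
  set N : ℕ := Wfin.card with hNdef
  set oiso : Fin N ≃o {x : Fin n // x ∈ Wfin} := Wfin.orderIsoOfFin hNdef.symm with hoisodef
  set wmap : Fin N → Fin n := fun a => (oiso a : Fin n) with hwmapdef
  have hwmono : ∀ {a b : Fin N}, a < b → wmap a < wmap b := by
    intro a b hab
    exact Subtype.coe_lt_coe.2 (oiso.lt_iff_lt.2 hab)
  have hwmonoval : ∀ {a b : Fin N}, a < b → (wmap a).val < (wmap b).val := by
    intro a b hab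
    exact hwmono hab
  have hwW : ∀ a : Fin N, deg adj n (wmap a).val ≤ ℓ := by
    intro a
    have h1 := (oiso a).2
    simp only [hWfindef, Finset.mem_filter, Finset.mem_univ, true_and] at h1
    exact h1
  have hmemW : ∀ v : V, v ∈ W ↔ e v ∈ Wfin := by
    intro v
    simp only [hWdef, hWfindef, Set.mem_setOf_eq, Finset.mem_filter, Finset.mem_univ, true_and]
    rw [hdeglink v]
  set q : ↥W ≃ Fin N := (e.subtypeEquiv hmemW).trans oiso.toEquiv.symm with hqdef
  have hq : ∀ u : ↥W, wmap (q u) = e ↑u := by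
    intro u
    show ((oiso (oiso.toEquiv.symm ((e.subtypeEquiv hmemW) u))) : Fin n) = e ↑u
    rw [show oiso (oiso.toEquiv.symm ((e.subtypeEquiv hmemW) u))
        = (e.subtypeEquiv hmemW) u from oiso.toEquiv.apply_symm_apply _]
    rfl
  -- the back-neighbourhood data
  set AdjWn : ℕ → ℕ → Prop := fun i j =>
    ∃ (hi : i < N) (hj : j < N), adj (wmap ⟨i, hi⟩).val (wmap ⟨j, hj⟩).val with hAdjWndef
  have hAdjWnsymm : ∀ {i j}, AdjWn i j → AdjWn j i := by
    rintro i j ⟨hi, hj, h⟩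
    exact ⟨hj, hi, hOKT.symm h⟩
  set B : ℕ → Finset ℕ := fun j => (Finset.range j).filter (fun i => AdjWn i j) with hBdef
  have hB1 : ∀ j, ∀ i ∈ B j, i < j := by
    intro j i hi
    simpa using (Finset.mem_filter.1 hi).1
  have hkey : ∀ x y : Fin N, AdjWn x.val y.val → adj (wmap x).val (wmap y).val := by
    rintro x y ⟨hi, hj, h⟩
    simpa using h
  have hkey2 : ∀ x y : Fin N, adj (wmap x).val (wmap y).val → AdjWn x.val y.val := by
    intro x y h
    exact ⟨x.isLt, y.isLt, by simpa using h⟩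
  have hB3 : ∀ j i i', i ∈ B j → i' ∈ B j → i < i' → i ∈ B i' := by
    intro j i i' hi hi' hii'
    obtain ⟨hir, hiA⟩ := Finset.mem_filter.1 hi
    obtain ⟨hir', hiA'⟩ := Finset.mem_filter.1 hi'
    obtain ⟨hiN, hjN, hadj1⟩ := hiA
    obtain ⟨hiN', hjN', hadj2⟩ := hiA'
    refine Finset.mem_filter.2 ⟨by simpa using hii', ⟨hiN, hiN', ?_⟩⟩
    refine back_clique hOKT ?_ ?_ hadj1 (by simpa using hadj2)
    · exact hwmonoval (show (⟨i, hiN⟩ : Fin N) < ⟨i', hiN'⟩ by simpa using hii')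
    · exact hwmonoval (show (⟨i', hiN'⟩ : Fin N) < ⟨j, hjN⟩ by
        simpa using Finset.mem_range.1 hir')
  have hB2 : ∀ j, (B j).card ≤ d := by
    intro j
    by_cases hjN : j < N
    · have hbound : ∀ m ∈ insert j (B j), m < N := by
        intro m hm
        rcases Finset.mem_insert.1 hm with rfl | hm
        · exact hjN
        · exact lt_trans (hB1 j m hm) hjN
      set Bfin : Finset (Fin N) := (insert j (B j)).attachFin hbound with hBfindef
      set Cn : Finset ℕ := Bfin.image (fun a => (wmap a).val) with hCndef
      have hwsm : StrictMono (fun a : Fin N => (wmap a).val) := fun a b h => hwmonoval h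
      have hinj : Function.Injective (fun a : Fin N => (wmap a).val) := hwsm.injective
      have hCncard : Cn.card = (B j).card + 1 := by
        rw [hCndef, Finset.card_image_of_injective _ hinj, hBfindef, Finset.card_attachFin,
          Finset.card_insert_of_notMem (fun hc => by have := hB1 j j hc; omega)]
      have hmemBfin : ∀ x : Fin N, x ∈ Bfin ↔ (x.val = j ∨ x.val ∈ B j) := by
        intro x
        rw [hBfindef, Finset.mem_attachFin, Finset.mem_insert]
      have hCsub : Cn ⊆ Finset.range n := by
        intro a ha
        obtain ⟨x, hx, rfl⟩ := Finset.mem_image.1 ha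
        simp only [Finset.mem_range]
        exact (wmap x).isLt
      have hadjxy : ∀ x y : Fin N, x ∈ Bfin → y ∈ Bfin → x < y →
          adj (wmap x).val (wmap y).val := by
        intro x y hx hy hxy
        rcases (hmemBfin y).1 hy with hyj | hyB
        · -- y is the top vertex j
          rcases (hmemBfin x).1 hx with hxj | hxB
          · exact absurd (hxj.trans hyj.symm) (fun hc => by
              have := hwmonoval hxy; have : x = y := Fin.ext hc; omega)
          · have hA : AdjWn x.val j := (Finset.mem_filter.1 hxB).2
            obtain ⟨h1, h2, h3⟩ := hA
            have hxx : (⟨x.val, h1⟩ : Fin N) = x := Fin.eta x h1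
            have hyy : (⟨j, h2⟩ : Fin N) = y := Fin.ext (by rw [hyj])
            rwa [hxx, hyy] at h3
        · -- y ∈ B j, hence x ∈ B j too (x < y < j) or x = j impossible
          rcases (hmemBfin x).1 hx with hxj | hxB
          · have := hB1 j y.val hyB
            have := hwmonoval hxy
            have hxyv : x.val < y.val := by
              have : (x : ℕ) < y := hxy
              exact this
            omega
          · -- both in B j : use hB3
            have hxyv : x.val < y.val := hxy
            have hmem := hB3 j x.val y.val hxB hyB hxyv
            have hA : AdjWn x.val y.val := (Finset.mem_filter.1 hmem).2
            exact hkey x y hA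
      have hcl : IsCl adj Cn := by
        intro a ha b hb hab
        obtain ⟨x, hx, rfl⟩ := Finset.mem_image.1 ha
        obtain ⟨y, hy, rfl⟩ := Finset.mem_image.1 hb
        rcases lt_trichotomy x y with h' | h' | h'
        · exact hadjxy x y hx hy h'
        · exact absurd (congrArg (fun z => (wmap z).val) h') hab
        · exact hOKT.symm (hadjxy y x hy hx h')
      have hdegs : ∀ a ∈ Cn, deg adj n a ≤ ℓ := by
        intro a ha
        obtain ⟨x, hx, rfl⟩ := Finset.mem_image.1 ha
        exact hwW x
      have := clique_bound hOKT hkl hn' hCsub hcl hdegs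
      omega
    · have : B j = ∅ := by
        apply Finset.filter_false_of_mem
        rintro i hi ⟨hiN, hjN', hadj'⟩
        exact hjN hjN'
      rw [this]; simp
  -- enough low-degree vertices
  have hNd : d + 1 ≤ N := by
    have hf : ∀ i ∈ Finset.range (d + 1), (⟨n - 1 - i, by omega⟩ : Fin n) ∈ Wfin := by
      intro i hi
      simp only [Finset.mem_range] at hi
      simp only [hWfindef, Finset.mem_filter, Finset.mem_univ, true_and]
      have h1 : k + 1 ≤ n - 1 - i := by omega
      have h2 := late_deg hOKT h1 (show n - 1 - i < n by omega)
      omega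
    have hinj : Set.InjOn (fun i => (⟨n - 1 - i, by omega⟩ : Fin n))
        (Finset.range (d + 1)) := by
      intro a ha b hb hab
      simp only [Finset.coe_range, Set.mem_Iio] at ha hb
      have : n - 1 - a = n - 1 - b := congrArg Fin.val hab
      omega
    have := Finset.card_le_card_of_injOn _ hf hinj
    simpa using this
  -- build the d-tree structure
  obtain ⟨T, hT1, hT2, hT3, hT4, hT5⟩ := builder d B hB1 hB2 hB3 N
  set HW : SimpleGraph ↥W :=
    { Adj := fun u v => ((q u).val < (q v).val ∧ (q u).val ∈ T (q v).val) ∨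
        ((q v).val < (q u).val ∧ (q v).val ∈ T (q u).val),
      symm := ⟨by intro u v h; tauto⟩,
      loopless := ⟨by intro u h; rcases h with ⟨h, _⟩ | ⟨h, _⟩ <;> omega⟩ } with hHWdef
  have hHWadj : ∀ u v : ↥W, HW.Adj u v ↔
      (((q u).val < (q v).val ∧ (q u).val ∈ T (q v).val) ∨
        ((q v).val < (q u).val ∧ (q v).val ∈ T (q u).val)) := fun u v => Iff.rfl
  have hktree : IsKTree d HW := by
    refine ⟨N, q, by omega, ?_, ?_⟩
    · intro i j hij hjd
      rw [hHWadj]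
      left
      simp only [Equiv.apply_symm_apply]
      have hiv : (i : ℕ) < (j : ℕ) := hij
      refine ⟨hiv, ?_⟩
      rw [hT1 j.val j.isLt (by omega)]
      simpa using hiv
    · intro j hjd
      refine ⟨(T j.val).attachFin (fun m hm => lt_trans (hT3 j.val j.isLt m hm) j.isLt),
        ?_, ?_, ?_, ?_⟩
      · rw [Finset.card_attachFin, hT2 j.val j.isLt (by omega)]
      · intro i hi
        rw [Finset.mem_attachFin] at hi
        exact hT3 j.val j.isLt i.val hi
      · intro i hij
        rw [hHWadj]
        simp only [Equiv.apply_symm_apply, Finset.mem_attachFin]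
        have hiv : (i : ℕ) < (j : ℕ) := hij
        constructor
        · rintro (⟨h1, h2⟩ | ⟨h1, h2⟩)
          · exact h2
          · omega
        · intro h
          exact Or.inl ⟨hiv, h⟩
      · intro i hi i' hi' hii'
        rw [Finset.mem_attachFin] at hi hi'
        rw [hHWadj]
        simp only [Equiv.apply_symm_apply]
        rcases lt_trichotomy (i : ℕ) (i' : ℕ) with h' | h' | h'
        · exact Or.inl ⟨h', hT5 j.val j.isLt i.val hi i'.val hi' h'⟩
        · exact absurd (Fin.ext h') hii'
        · exact Or.inr ⟨h', hT5 j.val j.isLt i'.val hi' i.val hi h'⟩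
  have hle : G.induce W ≤ HW := by
    intro u v huv
    have hGuv : G.Adj ↑u ↑v := huv
    have hadjuv : adj (wmap (q u)).val (wmap (q v)).val := by
      rw [hq u, hq v]
      exact (hadjG ↑u ↑v).1 hGuv
    have hA : AdjWn (q u).val (q v).val := hkey2 (q u) (q v) hadjuv
    rw [hHWadj]
    rcases lt_trichotomy ((q u) : ℕ) ((q v) : ℕ) with h' | h' | h'
    · left
      refine ⟨h', hT4 (q v).val (q v).isLt ?_⟩
      exact Finset.mem_filter.2 ⟨by simpa using h', hA⟩
    · exact absurd (q.injective (Fin.ext h')) (fun hc => G.loopless.irrefl _ (hc ▸ hGuv))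
    · right
      refine ⟨h', hT4 (q u).val (q u).isLt ?_⟩
      exact Finset.mem_filter.2 ⟨by simpa using h', hAdjWnsymm hA⟩
  exact Nat.sInf_le ⟨HW, hktree, hle⟩
end

section
/- For every real ε > 0 and all integers 0 ≤ t ≤ k, there exists an integer d = d(ε,k,t) such that for all n ≥ 2k+1, every graph G on n vertices with treewidth at most k contains a set S of at least (1-ε)·(t+1)·n/(k+1) vertices, each of degree at most d in G, such that the induced subgraph G[S] has treewidth at most t. -/
open Finset

namespace KTC

def goodT (m t : ℕ) (B : Fin m → Finset (Fin m)) (prior : ℕ → Finset (Fin m)) (j : ℕ)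
    (T : Finset (Fin m)) : Prop :=
  (∀ i ∈ T, (i : ℕ) < j) ∧ T.card = t ∧ (∀ hj : j < m, B ⟨j, hj⟩ ⊆ T) ∧
  (∀ i ∈ T, ∀ i' ∈ T, i < i' → i ∈ prior (i' : ℕ))

open Classical in
noncomputable def step (m t : ℕ) (B : Fin m → Finset (Fin m)) (j : ℕ)
    (prior : ℕ → Finset (Fin m)) : Finset (Fin m) :=
  if j < t + 1 then univ.filter (fun i : Fin m => (i : ℕ) < j)
  else if h : ∃ T, goodT m t B prior j T then h.choose else ∅

noncomputable def g (m t : ℕ) (B : Fin m → Finset (Fin m)) : ℕ → ℕ → Finset (Fin m)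
  | 0 => fun _ => ∅
  | (j+1) => fun i => if i = j then step m t B j (g m t B j) else g m t B j i

noncomputable def Sf (m t : ℕ) (B : Fin m → Finset (Fin m)) (j : ℕ) : Finset (Fin m) :=
  step m t B j (g m t B j)

lemma g_eq (m t : ℕ) (B : Fin m → Finset (Fin m)) :
    ∀ j i, i < j → g m t B j i = Sf m t B i := by
  intro j
  induction j with
  | zero => omega
  | succ j ih =>
    intro i hi
    by_cases h : i = j
    · subst h; simp [g, Sf]
    · have : i < j := by omega
      simpa [g, h] using ih i this

lemma Sf_small (m t : ℕ) (B : Fin m → Finset (Fin m)) (j : ℕ) (hj : j < t + 1) :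
    Sf m t B j = univ.filter (fun i : Fin m => (i : ℕ) < j) := by
  simp [Sf, step, hj]

lemma Sf_big (m t : ℕ) (B : Fin m → Finset (Fin m)) (j : ℕ) (hj : ¬ j < t + 1)
    (h : ∃ T, goodT m t B (Sf m t B) j T) :
    goodT m t B (Sf m t B) j (Sf m t B j) := by
  have h' : ∃ T, goodT m t B (g m t B j) j T := by
    obtain ⟨T, h1, h2, h3, h4⟩ := h
    exact ⟨T, h1, h2, h3, fun i hi i' hi' hlt => by
      rw [g_eq m t B j _ (h1 i' hi')]; exact h4 i hi i' hi' hlt⟩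
  have hs := h'.choose_spec
  have : Sf m t B j = h'.choose := by
    rw [Sf, step, if_neg hj, dif_pos h']
  rw [this]
  obtain ⟨h1, h2, h3, h4⟩ := hs
  exact ⟨h1, h2, h3, fun i hi i' hi' hlt => by
    rw [← g_eq m t B j _ (h1 i' hi')]; exact h4 i hi i' hi' hlt⟩

noncomputable def HG (m t : ℕ) (B : Fin m → Finset (Fin m)) : SimpleGraph (Fin m) where
  Adj a b := (a < b ∧ a ∈ Sf m t B (b : ℕ)) ∨ (b < a ∧ b ∈ Sf m t B (a : ℕ))
  symm := by constructor; intro a b h; tauto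
  loopless := by constructor; intro a h; rcases h with ⟨h, _⟩ | ⟨h, _⟩ <;> exact absurd h (lt_irrefl a)

def Inv (m t : ℕ) (B : Fin m → Finset (Fin m)) (j : Fin m) : Prop :=
  (∀ i ∈ Sf m t B (j : ℕ), i < j) ∧ B j ⊆ Sf m t B (j : ℕ) ∧
  (Sf m t B (j : ℕ)).card = min (j : ℕ) t ∧
  (∀ i ∈ Sf m t B (j : ℕ), ∀ i' ∈ Sf m t B (j : ℕ), i < i' → i ∈ Sf m t B (i' : ℕ))

lemma exists_mem_nm {α : Type*} [DecidableEq α] {s u : Finset α} (h : s.card < u.card) :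
    ∃ v ∈ u, v ∉ s := by
  by_contra hc; push_neg at hc
  exact absurd (card_le_card fun v hv => hc v hv) (by omega)

variable {m t : ℕ}

lemma extend_one (Sfn : ℕ → Finset (Fin m))
    (hSf_small : ∀ j : ℕ, j < t + 1 → Sfn j = univ.filter (fun i : Fin m => (i : ℕ) < j))
    (j : ℕ) (hjm : j < m) (hjt : t + 1 ≤ j)
    (IH1 : ∀ i : Fin m, (i : ℕ) < j → ∀ a ∈ Sfn (i : ℕ), a < i)
    (IH3 : ∀ i : Fin m, (i : ℕ) < j → (Sfn (i : ℕ)).card = min (i : ℕ) t)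
    (IH4 : ∀ i : Fin m, (i : ℕ) < j →
      ∀ a ∈ Sfn (i : ℕ), ∀ b ∈ Sfn (i : ℕ), a < b → a ∈ Sfn (b : ℕ))
    (C : Finset (Fin m)) (hC1 : ∀ i ∈ C, (i : ℕ) < j)
    (hC2 : ∀ a ∈ C, ∀ b ∈ C, a < b → a ∈ Sfn (b : ℕ))
    (hCc : C.card < t) :
    ∃ v : Fin m, v ∉ C ∧ (v : ℕ) < j ∧
      (∀ a ∈ C, a < v → a ∈ Sfn (v : ℕ)) ∧ (∀ a ∈ C, v < a → v ∈ Sfn (a : ℕ)) := by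
  rcases C.eq_empty_or_nonempty with rfl | hne
  · exact ⟨⟨0, by omega⟩, by simp, by simp; omega, by simp, by simp⟩
  · set w := C.max' hne with hw
    have hwC : w ∈ C := C.max'_mem hne
    have hle : ∀ a ∈ C, a ≤ w := fun a ha => C.le_max' a ha
    have hwj : (w : ℕ) < j := hC1 w hwC
    have hsub : C ⊆ Iic w := fun a ha => mem_Iic.2 (hle a ha)
    have hcard_le : C.card ≤ (w : ℕ) + 1 := by
      have := card_le_card hsub
      rwa [Fin.card_Iic] at this
    by_cases hseg : C.card = (w : ℕ) + 1
    · -- C is the full initial segment; take v = w+1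
      have hv1 : (w : ℕ) + 1 < t + 1 := by omega
      refine ⟨⟨(w : ℕ) + 1, by omega⟩, ?_, by simp; omega, ?_, ?_⟩
      · intro hvC
        have := hle _ hvC
        simp only [Fin.le_def] at this; omega
      · intro a haC _
        rw [hSf_small _ hv1]
        simp only [mem_filter, mem_univ, true_and]
        have := hle a haC
        simp only [Fin.le_def] at this; omega
      · intro a haC hlt
        have := hle a haC
        rw [Fin.le_def] at this; rw [Fin.lt_def] at hlt; simp at hlt; omega
    · -- C.card ≤ w; pick v in Sfn w not in C
      have hcw : C.card ≤ (w : ℕ) := by omega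
      have hwlt := IH1 w hwj
      have herase : C.erase w ⊆ Sfn (w : ℕ) := by
        intro a ha
        rw [mem_erase] at ha
        exact hC2 a ha.2 w hwC (lt_of_le_of_ne (hle a ha.2) ha.1)
      have hcards : (C.erase w).card < (Sfn (w : ℕ)).card := by
        rw [card_erase_of_mem hwC, IH3 w hwj]
        have h1 : 1 ≤ C.card := card_pos.2 hne
        omega
      obtain ⟨v, hvS, hvne⟩ := exists_mem_nm hcards
      have hvw : v < w := hwlt v hvS
      have hvC : v ∉ C := by
        intro hvC
        exact hvne (mem_erase.2 ⟨ne_of_lt hvw, hvC⟩)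
      refine ⟨v, hvC, lt_trans (Fin.lt_def.1 hvw) hwj, ?_, ?_⟩
      · intro a haC hav
        have haw : a ≠ w := by rintro rfl; exact absurd hav (asymm hvw)
        exact IH4 w hwj a (herase (mem_erase.2 ⟨haw, haC⟩)) v hvS hav
      · intro a haC hva
        rcases eq_or_ne a w with rfl | haw
        · exact hvS
        · exact IH4 w hwj v hvS a (herase (mem_erase.2 ⟨haw, haC⟩)) hva

lemma extend_many (Sfn : ℕ → Finset (Fin m))
    (hSf_small : ∀ j : ℕ, j < t + 1 → Sfn j = univ.filter (fun i : Fin m => (i : ℕ) < j))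
    (j : ℕ) (hjm : j < m) (hjt : t + 1 ≤ j)
    (IH1 : ∀ i : Fin m, (i : ℕ) < j → ∀ a ∈ Sfn (i : ℕ), a < i)
    (IH3 : ∀ i : Fin m, (i : ℕ) < j → (Sfn (i : ℕ)).card = min (i : ℕ) t)
    (IH4 : ∀ i : Fin m, (i : ℕ) < j →
      ∀ a ∈ Sfn (i : ℕ), ∀ b ∈ Sfn (i : ℕ), a < b → a ∈ Sfn (b : ℕ)) :
    ∀ (r : ℕ) (C : Finset (Fin m)), C.card + r = t → (∀ i ∈ C, (i : ℕ) < j) →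
      (∀ a ∈ C, ∀ b ∈ C, a < b → a ∈ Sfn (b : ℕ)) →
      ∃ T, C ⊆ T ∧ (∀ i ∈ T, (i : ℕ) < j) ∧
        (∀ a ∈ T, ∀ b ∈ T, a < b → a ∈ Sfn (b : ℕ)) ∧ T.card = t := by
  intro r
  induction r with
  | zero =>
    intro C hc h1 h2
    exact ⟨C, subset_rfl, h1, h2, by omega⟩
  | succ r ih =>
    intro C hc h1 h2
    obtain ⟨v, hvC, hvj, hv1, hv2⟩ :=
      extend_one Sfn hSf_small j hjm hjt IH1 IH3 IH4 C h1 h2 (by omega)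
    have hcard : (insert v C).card + r = t := by
      rw [card_insert_of_notMem hvC]; omega
    refine ih (insert v C) hcard ?_ ?_ |>.imp fun T ⟨hT0, hT1, hT2, hT3⟩ =>
      ⟨(subset_insert v C).trans hT0, hT1, hT2, hT3⟩
    · intro i hi
      rcases mem_insert.1 hi with rfl | hi
      · exact hvj
      · exact h1 i hi
    · intro a ha b hb hab
      by_cases hav : a = v
      · subst hav
        rcases mem_insert.1 hb with hbv | hb
        · exact absurd (hbv ▸ hab) (lt_irrefl _)
        · exact hv2 b hb hab
      · have ha' : a ∈ C := (mem_insert.1 ha).resolve_left hav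
        by_cases hbv : b = v
        · exact hbv ▸ hv1 a ha' (hbv ▸ hab)
        · exact h2 a ha' b ((mem_insert.1 hb).resolve_left hbv) hab


lemma filter_lt_eq_Iio (m : ℕ) (j : Fin m) :
    univ.filter (fun i : Fin m => (i : ℕ) < (j : ℕ)) = Iio j := by
  ext i
  rw [mem_filter, mem_Iio, Fin.lt_def]
  simp

theorem inv_all (B : Fin m → Finset (Fin m)) (hm : t + 1 ≤ m)
    (hBlt : ∀ j, ∀ i ∈ B j, i < j)
    (hBcard : ∀ j, (B j).card ≤ t)
    (hBcons : ∀ j, ∀ i ∈ B j, ∀ i' ∈ B j, i < i' → i ∈ B i') :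
    ∀ j : Fin m, Inv m t B j := by
  have main : ∀ N : ℕ, ∀ j : Fin m, (j : ℕ) < N → Inv m t B j := by
    intro N
    induction N with
    | zero => omega
    | succ N ih =>
      intro j hj
      rcases lt_or_ge (j : ℕ) N with h | h
      · exact ih j h
      have hjN : (j : ℕ) = N := by omega
      -- IH for all smaller indices
      have IH : ∀ i : Fin m, (i : ℕ) < (j : ℕ) → Inv m t B i := fun i hi => ih i (by omega)
      by_cases hsm : (j : ℕ) < t + 1
      · have hS : Sf m t B (j : ℕ) = Iio j := by
          rw [Sf_small m t B _ hsm, filter_lt_eq_Iio]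
        refine ⟨?_, ?_, ?_, ?_⟩
        · intro i hi; rw [hS] at hi; exact mem_Iio.1 hi
        · intro i hi; rw [hS, mem_Iio]; exact hBlt j i hi
        · rw [hS, Fin.card_Iio]; omega
        · intro i hi i' hi' hlt
          rw [hS, mem_Iio] at hi hi'
          have hi't : (i' : ℕ) < t + 1 := by
            have := Fin.lt_def.1 hi'; omega
          rw [Sf_small m t B _ hi't, filter_lt_eq_Iio, mem_Iio]; exact hlt
      · push_neg at hsm
        have hex : ∃ T, goodT m t B (Sf m t B) (j : ℕ) T := by
          have hC1 : ∀ i ∈ B j, (i : ℕ) < (j : ℕ) := fun i hi => Fin.lt_def.1 (hBlt j i hi)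
          have hC2 : ∀ a ∈ B j, ∀ b ∈ B j, a < b → a ∈ Sf m t B (b : ℕ) := by
            intro a ha b hb hab
            exact (IH b (hC1 b hb)).2.1 (hBcons j a ha b hb hab)
          obtain ⟨T, hT0, hT1, hT2, hT3⟩ :=
            extend_many (Sf m t B) (fun j' hj' => Sf_small m t B j' hj') (j : ℕ) j.isLt hsm
              (fun i hi => (IH i hi).1) (fun i hi => (IH i hi).2.2.1)
              (fun i hi => (IH i hi).2.2.2) (t - (B j).card) (B j)
              (by have := hBcard j; omega) hC1 hC2
          refine ⟨T, hT1, hT3, ?_, hT2⟩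
          intro hjm'
          have : (⟨(j : ℕ), hjm'⟩ : Fin m) = j := by ext; rfl
          rw [this]; exact hT0
        have hgood := Sf_big m t B (j : ℕ) (by omega) hex
        obtain ⟨h1, h2, h3, h4⟩ := hgood
        refine ⟨?_, ?_, ?_, h4⟩
        · intro i hi; exact Fin.lt_def.2 (h1 i hi)
        · have := h3 j.isLt
          have hj' : (⟨(j : ℕ), j.isLt⟩ : Fin m) = j := by ext; rfl
          rwa [hj'] at this
        · rw [h2]; omega
  exact fun j => main ((j : ℕ) + 1) j (by omega)

theorem completion (B : Fin m → Finset (Fin m)) (hm : t + 1 ≤ m)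
    (hBlt : ∀ j, ∀ i ∈ B j, i < j)
    (hBcard : ∀ j, (B j).card ≤ t)
    (hBcons : ∀ j, ∀ i ∈ B j, ∀ i' ∈ B j, i < i' → i ∈ B i') :
    ∃ H : SimpleGraph (Fin m), IsKTree t H ∧
      ∀ i j : Fin m, i < j → i ∈ B j → H.Adj i j := by
  have inv := inv_all B hm hBlt hBcard hBcons
  refine ⟨HG m t B, ⟨m, Equiv.refl _, hm, ?_, ?_⟩, ?_⟩
  · intro i j hij hj
    show HG m t B |>.Adj i j
    left
    refine ⟨hij, ?_⟩
    rw [Sf_small m t B _ hj, filter_lt_eq_Iio, mem_Iio]; exact hij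
  · intro j hj
    refine ⟨Sf m t B (j : ℕ), ?_, (inv j).1, ?_, ?_⟩
    · rw [(inv j).2.2.1]; omega
    · intro i hij
      constructor
      · rintro (⟨_, h⟩ | ⟨h, _⟩)
        · exact h
        · exact absurd hij (asymm h)
      · intro hi; exact Or.inl ⟨hij, hi⟩
    · intro i hi i' hi' hne
      rcases lt_or_gt_of_ne hne with hlt | hlt
      · exact Or.inl ⟨hlt, (inv j).2.2.2 i hi i' hi' hlt⟩
      · exact Or.inr ⟨hlt, (inv j).2.2.2 i' hi' i hi hlt⟩
  · intro i j hij hiB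
    exact Or.inl ⟨hij, (inv j).2.1 hiB⟩

end KTC
section part2
open Finset

namespace COL

open Classical in
noncomputable def cstep (N q : ℕ) (S : ℕ → Finset (Fin N)) (j : ℕ)
    (prior : ℕ → Fin (q+1)) : Fin (q+1) :=
  if hj : j < q + 1 then ⟨j, hj⟩
  else if h : ∃ col : Fin (q+1), ∀ i ∈ S j, prior (i : ℕ) ≠ col then h.choose
  else ⟨0, Nat.succ_pos q⟩

noncomputable def cg (N q : ℕ) (S : ℕ → Finset (Fin N)) : ℕ → ℕ → Fin (q+1)
  | 0 => fun _ => ⟨0, Nat.succ_pos q⟩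
  | (j+1) => fun i => if i = j then cstep N q S j (cg N q S j) else cg N q S j i

noncomputable def cf (N q : ℕ) (S : ℕ → Finset (Fin N)) (j : ℕ) : Fin (q+1) :=
  cstep N q S j (cg N q S j)

lemma cg_eq (N q : ℕ) (S : ℕ → Finset (Fin N)) :
    ∀ j i, i < j → cg N q S j i = cf N q S i := by
  intro j
  induction j with
  | zero => omega
  | succ j ih =>
    intro i hi
    by_cases h : i = j
    · subst h; simp [cg, cf]
    · have : i < j := by omega
      simpa [cg, h] using ih i this

lemma cf_small (N q : ℕ) (S : ℕ → Finset (Fin N)) (j : ℕ) (hj : j < q + 1) :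
    cf N q S j = ⟨j, hj⟩ := by
  simp [cf, cstep, hj]

lemma cf_big (N q : ℕ) (S : ℕ → Finset (Fin N)) (j : ℕ) (hj : ¬ j < q + 1)
    (hcard : (S j).card ≤ q) (hS : ∀ i ∈ S j, (i : ℕ) < j) :
    ∀ i ∈ S j, cf N q S (i : ℕ) ≠ cf N q S j := by
  have hex : ∃ col : Fin (q+1), ∀ i ∈ S j, cg N q S j (i : ℕ) ≠ col := by
    have h1 : ((S j).image (fun i : Fin N => cg N q S j (i : ℕ))).card <
        (univ : Finset (Fin (q+1))).card := by
      have := card_image_le (s := S j) (f := fun i : Fin N => cg N q S j (i : ℕ))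
      have h2 : (univ : Finset (Fin (q+1))).card = q + 1 := by simp
      omega
    obtain ⟨col, _, hcol⟩ := KTC.exists_mem_nm h1
    exact ⟨col, fun i hi hEq => hcol (mem_image.2 ⟨i, hi, hEq⟩)⟩
  intro i hi
  have hcf : cf N q S j = hex.choose := by
    rw [cf, cstep, dif_neg hj, dif_pos hex]
  rw [hcf, ← cg_eq N q S j (i : ℕ) (hS i hi)]
  exact hex.choose_spec i hi

end COL

lemma avg_lemma {α : Type*} [DecidableEq α] [Fintype α] (f : α → ℕ) (r : ℕ)
    (hr : r ≤ Fintype.card α) :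
    ∃ C : Finset α, C.card = r ∧ r * (∑ a, f a) ≤ Fintype.card α * (∑ a ∈ C, f a) := by
  have hP : ((univ : Finset α).powersetCard r).Nonempty := by
    obtain ⟨C, hC1, hC2⟩ := Finset.exists_subset_card_eq (s := (univ : Finset α)) (n := r)
      (by simpa using hr)
    exact ⟨C, Finset.mem_powersetCard.2 ⟨hC1, hC2⟩⟩
  obtain ⟨C, hCmem, hmax⟩ := Finset.exists_max_image _ (fun C => ∑ a ∈ C, f a) hP
  obtain ⟨hCs, hCcard⟩ := Finset.mem_powersetCard.1 hCmem
  refine ⟨C, hCcard, ?_⟩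
  have key : ∀ c ∈ C, ∀ c', c' ∉ C → f c' ≤ f c := by
    intro c hc c' hc'
    have hC' : insert c' (C.erase c) ∈ (univ : Finset α).powersetCard r := by
      refine Finset.mem_powersetCard.2 ⟨fun x _ => mem_univ x, ?_⟩
      rw [card_insert_of_notMem (fun h => hc' (mem_of_mem_erase h)),
        card_erase_of_mem hc]
      have : 1 ≤ C.card := card_pos.2 ⟨c, hc⟩
      omega
    have h1 := hmax _ hC'
    rw [Finset.sum_insert (fun h => hc' (mem_of_mem_erase h))] at h1
    have h2 : f c + ∑ a ∈ C.erase c, f a = ∑ a ∈ C, f a :=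
      Finset.add_sum_erase C f hc
    omega
  have hsplit : (∑ a, f a) = (∑ a ∈ C, f a) + ∑ a ∈ Cᶜ, f a := by
    rw [add_comm, Finset.sum_compl_add_sum]
  have hcompl : ∀ c' ∈ Cᶜ, r * f c' ≤ ∑ a ∈ C, f a := by
    intro c' hc'
    rw [Finset.mem_compl] at hc'
    calc r * f c' = ∑ _a ∈ C, f c' := by rw [Finset.sum_const, hCcard, smul_eq_mul]
    _ ≤ ∑ a ∈ C, f a := Finset.sum_le_sum (fun c hc => key c hc c' hc')
  have h3 : r * ∑ a ∈ Cᶜ, f a ≤ (Fintype.card α - r) * ∑ a ∈ C, f a := by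
    calc r * ∑ a ∈ Cᶜ, f a = ∑ a ∈ Cᶜ, r * f a := by rw [Finset.mul_sum]
    _ ≤ ∑ _a ∈ Cᶜ, ∑ b ∈ C, f b := Finset.sum_le_sum hcompl
    _ = (Fintype.card α - r) * ∑ b ∈ C, f b := by
        rw [Finset.sum_const, smul_eq_mul, Finset.card_compl, hCcard]
  calc r * ∑ a, f a = r * ∑ a ∈ C, f a + r * ∑ a ∈ Cᶜ, f a := by rw [hsplit]; ring
  _ ≤ r * ∑ a ∈ C, f a + (Fintype.card α - r) * ∑ a ∈ C, f a := by omega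
  _ = Fintype.card α * ∑ a ∈ C, f a := by
      have : r + (Fintype.card α - r) = Fintype.card α := by omega
      rw [← add_mul, this]

end part2
section part3
open Finset

lemma isKTree_comap {U W : Type*} (k : ℕ) (H : SimpleGraph W) (hH : IsKTree k H)
    (ψ : U ≃ W) : IsKTree k (H.comap ψ) := by
  obtain ⟨n, e, hn, h2, h3⟩ := hH
  refine ⟨n, ψ.trans e, hn, ?_, ?_⟩
  · intro i j hij hj
    have := h2 i j hij hj
    simpa [SimpleGraph.comap] using this
  · intro j hj
    obtain ⟨S, hS1, hS2, hS3, hS4⟩ := h3 j hj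
    refine ⟨S, hS1, hS2, ?_, ?_⟩
    · intro i hi
      have := hS3 i hi
      simpa [SimpleGraph.comap] using this
    · intro i hi i' hi' hne
      have := hS4 i hi i' hi' hne
      simpa [SimpleGraph.comap] using this

lemma tw_le_of_equiv_small {U : Type*} (G' : SimpleGraph U) (m t : ℕ) (ψ : U ≃ Fin m)
    (hm : m ≤ t + 1) : treewidth G' ≤ t := by
  rcases Nat.eq_zero_or_pos m with rfl | hpos
  · have hempty : {k : ℕ | ∃ H : SimpleGraph U, IsKTree k H ∧ G' ≤ H} = ∅ := by
      ext k
      simp only [Set.mem_setOf_eq, Set.mem_empty_iff_false, iff_false]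
      rintro ⟨H, ⟨n, e, hn, -, -⟩, -⟩
      have : (0 : ℕ) < n := by omega
      exact (ψ (e.symm ⟨0, this⟩)).elim0
    rw [treewidth, hempty, Nat.sInf_empty]
    omega
  · have hk : IsKTree (m - 1) (⊤ : SimpleGraph U) := by
      refine ⟨m, ψ, by omega, ?_, ?_⟩
      · intro i j hij _
        simp only [SimpleGraph.top_adj]
        exact fun h => absurd (ψ.symm.injective h) (ne_of_lt hij)
      · intro j hj
        have := j.isLt
        omega
    calc treewidth G' ≤ m - 1 := Nat.sInf_le ⟨⊤, hk, le_top⟩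
    _ ≤ t := by omega

end part3
section part4
open Finset

/-- For every real `ε > 0` and all integers `0 ≤ t ≤ k`, there exists an
integer `d` such that for all `n ≥ 2k+1`, every graph `G` on `n` vertices with treewidth at
most `k` contains a set `S` of at least `(1-ε)·(t+1)·n/(k+1)` vertices, each of degree at
most `d` in `G`, whose induced subgraph has treewidth at most `t`. -/
theorem stmt10 (ε : ℝ) (hε : 0 < ε) (t k : ℕ) (htk : t ≤ k) :
    ∃ d : ℕ, ∀ (V : Type) (_ : Fintype V) (G : SimpleGraph V),
      2 * k + 1 ≤ Fintype.card V → treewidth G ≤ k →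
      ∃ S : Finset V,
        (∀ v ∈ S, degN G v ≤ d) ∧
        treewidth (G.induce (S : Set V)) ≤ t ∧
        (1 - ε) * ((t + 1 : ℝ) * Fintype.card V / (k + 1)) ≤ S.card := by
  classical
  refine ⟨⌈(2 * k : ℝ) / ε⌉₊, ?_⟩
  intro V _ G hcard htw
  set d := ⌈(2 * k : ℝ) / ε⌉₊ with hd
  have hV : Nonempty V := by
    rw [← Fintype.card_pos_iff]; omega
  have hNE : {k0 : ℕ | ∃ H : SimpleGraph V, IsKTree k0 H ∧ G ≤ H}.Nonempty := by
    refine ⟨Fintype.card V - 1, ⊤, ?_, le_top⟩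
    refine ⟨Fintype.card V, Fintype.equivFin V, by omega, ?_, ?_⟩
    · intro i j hij _
      simp only [SimpleGraph.top_adj]
      exact fun h => absurd ((Fintype.equivFin V).symm.injective h) (ne_of_lt hij)
    · intro j hj
      have := j.isLt
      omega
  have hmem := Nat.sInf_mem hNE
  set q := treewidth G with hq
  obtain ⟨H, hHk, hGH⟩ : ∃ H : SimpleGraph V, IsKTree q H ∧ G ≤ H := hmem
  have hqk : q ≤ k := htw
  obtain ⟨N, e, hqN, hinit, hlater⟩ := hHk
  have hcardN : Fintype.card V = N := by
    rw [← Fintype.card_fin N]; exact Fintype.card_congr e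
  set H₂ : SimpleGraph (Fin N) := H.comap (e.symm : Fin N → V) with hH₂def
  have hH₂ : ∀ a b : Fin N, H₂.Adj a b ↔ H.Adj (e.symm a) (e.symm b) := fun _ _ => Iff.rfl
  -- back-neighbourhood function
  obtain ⟨Sfn, P1, P2, P3, P4⟩ : ∃ Sfn : Fin N → Finset (Fin N),
      (∀ j, ∀ i ∈ Sfn j, i < j) ∧
      (∀ j, ∀ i, i < j → (H₂.Adj i j ↔ i ∈ Sfn j)) ∧
      (∀ j, (Sfn j).card = min (j : ℕ) q) ∧
      (∀ j, ∀ i ∈ Sfn j, ∀ i' ∈ Sfn j, i ≠ i' → H₂.Adj i i') := by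
    refine ⟨fun j => if h : q + 1 ≤ (j : ℕ) then (hlater j h).choose else Iio j,
      ?_, ?_, ?_, ?_⟩
    · intro j i hi
      by_cases h : q + 1 ≤ (j : ℕ)
      · simp only [dif_pos h] at hi
        exact (hlater j h).choose_spec.2.1 i hi
      · simp only [dif_neg h] at hi
        exact mem_Iio.1 hi
    · intro j i hij
      by_cases h : q + 1 ≤ (j : ℕ)
      · simp only [dif_pos h]
        exact (hlater j h).choose_spec.2.2.1 i hij
      · simp only [dif_neg h]
        exact iff_of_true (hinit i j hij (by omega)) (mem_Iio.2 hij)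
    · intro j
      by_cases h : q + 1 ≤ (j : ℕ)
      · simp only [dif_pos h, (hlater j h).choose_spec.1]
        omega
      · simp only [dif_neg h, Fin.card_Iio]
        omega
    · intro j i hi i' hi' hne
      by_cases h : q + 1 ≤ (j : ℕ)
      · simp only [dif_pos h] at hi hi'
        exact (hlater j h).choose_spec.2.2.2 i hi i' hi' hne
      · simp only [dif_neg h, mem_Iio] at hi hi'
        rcases lt_or_gt_of_ne hne with hlt | hlt
        · exact hinit i i' hlt (by have := Fin.lt_def.1 hi'; omega)
        · exact (hinit i' i hlt (by have := Fin.lt_def.1 hi; omega)).symm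
  -- the colouring
  set Sfn' : ℕ → Finset (Fin N) := fun j => if h : j < N then Sfn ⟨j, h⟩ else ∅ with hSfn'
  set c : Fin N → Fin (q + 1) := fun j => COL.cf N q Sfn' (j : ℕ) with hc
  have hSfn'eq : ∀ j : Fin N, Sfn' (j : ℕ) = Sfn j := by
    intro j
    show (if h : (j : ℕ) < N then Sfn ⟨(j : ℕ), h⟩ else ∅) = Sfn j
    rw [dif_pos j.isLt]
  have hproper : ∀ a b : Fin N, a < b → H₂.Adj a b → c a ≠ c b := by
    intro a b hab hAdj
    by_cases hb : (b : ℕ) < q + 1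
    · have ha : (a : ℕ) < q + 1 := by have := Fin.lt_def.1 hab; omega
      have hca : c a = ⟨(a : ℕ), ha⟩ := COL.cf_small N q Sfn' _ ha
      have hcb : c b = ⟨(b : ℕ), hb⟩ := COL.cf_small N q Sfn' _ hb
      intro hcon
      rw [hca, hcb] at hcon
      have h2 : (a : ℕ) = (b : ℕ) := by
        have := congrArg Fin.val hcon
        simpa using this
      have := Fin.lt_def.1 hab; omega
    · have hcardS : (Sfn' (b : ℕ)).card ≤ q := by
        rw [hSfn'eq b, P3 b]; omega
      have hSlt : ∀ i ∈ Sfn' (b : ℕ), (i : ℕ) < (b : ℕ) := by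
        intro i hi
        rw [hSfn'eq b] at hi
        exact Fin.lt_def.1 (P1 b i hi)
      have hmem : a ∈ Sfn' (b : ℕ) := by
        rw [hSfn'eq b]
        exact (P2 b a hab).1 hAdj
      exact COL.cf_big N q Sfn' (b : ℕ) hb hcardS hSlt a hmem
  -- degree sum bound
  have hdegsum : ∑ j : Fin N, degN G (e.symm j) ≤ 2 * k * N := by
    have hdegle : ∀ v : V, degN G v ≤ degN H v := fun v =>
      Set.ncard_le_ncard (fun w hw => hGH hw) (Set.toFinite _)
    have hdH : ∀ j : Fin N, degN H (e.symm j) = degN H₂ j := by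
      intro j
      have himg : e.symm '' (H₂.neighborSet j) = H.neighborSet (e.symm j) := by
        ext v
        constructor
        · rintro ⟨i, hi, rfl⟩
          exact hi
        · intro hv
          refine ⟨e v, ?_, Equiv.symm_apply_apply e v⟩
          show H.Adj (e.symm j) (e.symm (e v))
          rwa [Equiv.symm_apply_apply]
      rw [degN, degN, ← himg, Set.ncard_image_of_injective _ e.symm.injective]
    have hnb : ∀ j, degN H₂ j ≤
        (Sfn j).card + (univ.filter (fun i => j < i ∧ H₂.Adj j i)).card := by
      intro j
      have hset : H₂.neighborSet j =
          ↑(Sfn j ∪ univ.filter (fun i => j < i ∧ H₂.Adj j i)) := by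
        ext i
        simp only [SimpleGraph.mem_neighborSet, coe_union, Set.mem_union, mem_coe,
          mem_filter, mem_univ, true_and]
        constructor
        · intro hadj
          rcases lt_trichotomy i j with hlt | rfl | hlt
          · exact Or.inl ((P2 j i hlt).1 hadj.symm)
          · exact absurd hadj H₂.irrefl
          · exact Or.inr ⟨hlt, hadj⟩
        · rintro (hmem | ⟨hlt, hadj⟩)
          · exact ((P2 j i (P1 j i hmem)).2 hmem).symm
          · exact hadj
      rw [degN, hset, Set.ncard_coe_finset]
      exact card_union_le _ _
    have h1 : (univ.filter (fun p : Fin N × Fin N => p.1 < p.2 ∧ H₂.Adj p.1 p.2)).card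
        = ∑ j : Fin N,
          ((univ.filter (fun p : Fin N × Fin N => p.1 < p.2 ∧ H₂.Adj p.1 p.2)).filter
            (fun p => p.2 = j)).card :=
      card_eq_sum_card_fiberwise (fun p _ => mem_univ p.2)
    have h1' : (univ.filter (fun p : Fin N × Fin N => p.1 < p.2 ∧ H₂.Adj p.1 p.2)).card
        = ∑ j : Fin N,
          ((univ.filter (fun p : Fin N × Fin N => p.1 < p.2 ∧ H₂.Adj p.1 p.2)).filter
            (fun p => p.1 = j)).card :=
      card_eq_sum_card_fiberwise (fun p _ => mem_univ p.1)
    have h2 : ∀ j : Fin N,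
        ((univ.filter (fun p : Fin N × Fin N => p.1 < p.2 ∧ H₂.Adj p.1 p.2)).filter
          (fun p => p.2 = j)).card = (Sfn j).card := by
      intro j
      apply card_bij (fun p _ => p.1)
      · intro p hp
        simp only [mem_filter, mem_univ, true_and] at hp
        obtain ⟨⟨hlt, hadj⟩, hpj⟩ := hp
        rw [hpj] at hlt hadj
        exact (P2 j p.1 hlt).1 hadj
      · intro p hp p' hp' hfst
        simp only [mem_filter, mem_univ, true_and] at hp hp'
        exact Prod.ext hfst (hp.2.trans hp'.2.symm)
      · intro i hi
        refine ⟨(i, j), ?_, rfl⟩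
        simp only [mem_filter, mem_univ, true_and]
        exact ⟨⟨P1 j i hi, (P2 j i (P1 j i hi)).2 hi⟩, trivial⟩
    have h3 : ∀ j : Fin N,
        ((univ.filter (fun p : Fin N × Fin N => p.1 < p.2 ∧ H₂.Adj p.1 p.2)).filter
          (fun p => p.1 = j)).card = (univ.filter (fun i => j < i ∧ H₂.Adj j i)).card := by
      intro j
      apply card_bij (fun p _ => p.2)
      · intro p hp
        simp only [mem_filter, mem_univ, true_and] at hp ⊢
        obtain ⟨⟨hlt, hadj⟩, hpj⟩ := hp
        rw [hpj] at hlt hadj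
        exact ⟨hlt, hadj⟩
      · intro p hp p' hp' hsnd
        simp only [mem_filter, mem_univ, true_and] at hp hp'
        exact Prod.ext (hp.2.trans hp'.2.symm) hsnd
      · intro i hi
        simp only [mem_filter, mem_univ, true_and] at hi
        refine ⟨(j, i), ?_, rfl⟩
        simp only [mem_filter, mem_univ, true_and]
        exact ⟨⟨hi.1, hi.2⟩, trivial⟩
    have hsum2 : ∑ j : Fin N, (univ.filter (fun i => j < i ∧ H₂.Adj j i)).card
        = ∑ j : Fin N, (Sfn j).card := by
      rw [← Finset.sum_congr rfl (fun j _ => h3 j), ← h1', h1]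
      exact Finset.sum_congr rfl (fun j _ => h2 j)
    have hSq : ∑ j : Fin N, (Sfn j).card ≤ N * q := by
      calc ∑ j : Fin N, (Sfn j).card ≤ ∑ _j : Fin N, q := by
            refine sum_le_sum ?_
            intro j _
            rw [P3 j]
            omega
      _ = N * q := by rw [sum_const, card_univ, Fintype.card_fin, smul_eq_mul]
    calc ∑ j : Fin N, degN G (e.symm j) ≤ ∑ j : Fin N, degN H₂ j := by
          refine sum_le_sum (fun j _ => ?_)
          rw [← hdH j]
          exact hdegle _
    _ ≤ ∑ j : Fin N, ((Sfn j).card + (univ.filter (fun i => j < i ∧ H₂.Adj j i)).card) :=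
        sum_le_sum (fun j _ => hnb j)
    _ = ∑ j : Fin N, (Sfn j).card + ∑ j : Fin N, (univ.filter (fun i => j < i ∧ H₂.Adj j i)).card :=
        sum_add_distrib
    _ ≤ N * q + N * q := by rw [hsum2]; omega
    _ ≤ N * k + N * k := by
        have : N * q ≤ N * k := Nat.mul_le_mul_left N hqk
        omega
    _ = 2 * k * N := by ring
  -- bad and good vertices
  set Bad := univ.filter (fun j : Fin N => ¬ degN G (e.symm j) ≤ d) with hBad
  set Good := univ.filter (fun j : Fin N => degN G (e.symm j) ≤ d) with hGood
  have hBadcard : (d + 1) * Bad.card ≤ 2 * k * N := by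
    have h1 : ∀ j ∈ Bad, d + 1 ≤ degN G (e.symm j) := by
      intro j hj
      have := (mem_filter.1 hj).2
      omega
    calc (d + 1) * Bad.card = ∑ _j ∈ Bad, (d+1) := by rw [sum_const, smul_eq_mul, mul_comm]
    _ ≤ ∑ j ∈ Bad, degN G (e.symm j) := sum_le_sum h1
    _ ≤ ∑ j : Fin N, degN G (e.symm j) :=
        sum_le_sum_of_subset (subset_univ Bad)
    _ ≤ 2 * k * N := hdegsum
  have hGoodBad : Good.card + Bad.card = N := by
    rw [hGood, hBad]
    rw [card_filter_add_card_filter_not]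
    simp
  -- colour selection
  set t' := min t q with ht'
  set cnt : Fin (q + 1) → ℕ := fun col => (Good.filter (fun j => c j = col)).card with hcnt
  obtain ⟨Cs, hCscard, hCsum⟩ := avg_lemma cnt (t' + 1) (by simp; omega)
  have hcntsum : Good.card = ∑ col, cnt col :=
    card_eq_sum_card_fiberwise (fun j _ => mem_univ (c j))
  set W := Good.filter (fun j => c j ∈ Cs) with hW
  have hWGood : W ⊆ Good := filter_subset _ _
  have hWcard : W.card = ∑ col ∈ Cs, cnt col := by
    rw [card_eq_sum_card_fiberwise (f := c) (s := W) (t := Cs)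
      (fun j hj => (mem_filter.1 (mem_coe.1 hj)).2)]
    refine Finset.sum_congr rfl ?_
    intro col hcol
    congr 1
    ext j
    simp only [mem_filter, hW]
    constructor
    · rintro ⟨⟨hjG, -⟩, hcj⟩
      exact ⟨hjG, hcj⟩
    · rintro ⟨hjG, hcj⟩
      exact ⟨⟨hjG, hcj ▸ hcol⟩, hcj⟩
  set S : Finset V := W.map e.symm.toEmbedding with hS
  have hScard : S.card = W.card := card_map _
  have hmemS : ∀ v : V, v ∈ S ↔ e v ∈ W := by
    intro v
    rw [hS, mem_map]
    constructor
    · rintro ⟨j, hj, rfl⟩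
      simpa using hj
    · intro h
      exact ⟨e v, h, by simp⟩
  refine ⟨S, ?_, ?_, ?_⟩
  · -- degrees
    intro v hv
    have := (mem_filter.1 (hWGood ((hmemS v).1 hv))).2
    simpa using this
  · -- treewidth of induced graph
    have hSW : ∀ v : V, v ∈ (S : Set V) ↔ e v ∈ W := by
      intro v; rw [Finset.mem_coe]; exact hmemS v
    set m := W.card with hm
    set ι := W.orderIsoOfFin hm.symm with hι
    have hιmem : ∀ i : Fin m, ((ι i : Fin N)) ∈ W := fun i => (ι i).2
    have hψmem : ∀ v : ↥(S : Set V), e ↑v ∈ W := fun v => (hSW ↑v).1 v.2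
    set ψ : ↥(S : Set V) ≃ Fin m := {
      toFun := fun v => ι.symm ⟨e ↑v, hψmem v⟩
      invFun := fun i => ⟨e.symm ↑(ι i), (hSW (e.symm ↑(ι i))).2 (by
        rw [Equiv.apply_symm_apply]; exact hιmem i)⟩
      left_inv := by
        intro v
        apply Subtype.ext
        show e.symm ↑(ι (ι.symm ⟨e ↑v, hψmem v⟩)) = ↑v
        rw [OrderIso.apply_symm_apply]
        exact e.symm_apply_apply ↑v
      right_inv := by
        intro i
        simp only [Equiv.apply_symm_apply, Subtype.coe_eta, OrderIso.symm_apply_apply] } with hψ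
    have hψι : ∀ v : ↥(S : Set V), ((ι (ψ v) : Fin N)) = e ↑v := by
      intro v
      show ((ι (ι.symm ⟨e ↑v, hψmem v⟩) : Fin N)) = e ↑v
      rw [OrderIso.apply_symm_apply]
    by_cases hmt : m ≤ t + 1
    · exact tw_le_of_equiv_small _ m t ψ hmt
    · push_neg at hmt
      set Bf : Fin m → Finset (Fin m) :=
        fun j => univ.filter (fun i => i < j ∧ H₂.Adj ↑(ι i) ↑(ι j)) with hBf
      have hBmem : ∀ i j : Fin m, i ∈ Bf j ↔ (i < j ∧ H₂.Adj ↑(ι i) ↑(ι j)) := by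
        intro i j
        rw [hBf]
        simp
      have hmono : ∀ i j : Fin m, i < j → (↑(ι i) : Fin N) < ↑(ι j) := by
        intro i j hij
        exact Subtype.coe_lt_coe.2 (ι.strictMono hij)
      have hmemSfn : ∀ i j : Fin m, i < j → H₂.Adj ↑(ι i) ↑(ι j) →
          (↑(ι i) : Fin N) ∈ Sfn ↑(ι j) := by
        intro i j hij hadj
        exact (P2 _ _ (hmono i j hij)).1 hadj
      have hWC : ∀ x : Fin N, x ∈ W → c x ∈ Cs := fun x hx => (mem_filter.1 hx).2
      have hBcard : ∀ j, (Bf j).card ≤ t := by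
        intro j
        have hstep : (Bf j).card ≤ (Cs.erase (c ↑(ι j))).card := by
          apply card_le_card_of_injOn (fun i : Fin m => c ↑(ι i))
          · intro i hi
            rw [mem_coe, hBmem] at hi
            exact mem_erase.2 ⟨hproper _ _ (hmono i j hi.1) hi.2, hWC _ (hιmem i)⟩
          · intro i hi i' hi' hEq
            simp only [mem_coe] at hi hi'
            rw [hBmem] at hi hi'
            by_contra hne
            have hne' : (↑(ι i) : Fin N) ≠ ↑(ι i') := by
              intro hcon
              exact hne (ι.injective (Subtype.ext hcon))
            have hadjii : H₂.Adj ↑(ι i) ↑(ι i') :=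
              P4 _ _ (hmemSfn i j hi.1 hi.2) _ (hmemSfn i' j hi'.1 hi'.2) hne'
            rcases lt_or_gt_of_ne hne' with hlt | hlt
            · exact hproper _ _ hlt hadjii hEq
            · exact hproper _ _ hlt hadjii.symm hEq.symm
        have herase : (Cs.erase (c ↑(ι j))).card = t' := by
          rw [card_erase_of_mem (hWC _ (hιmem j)), hCscard]
          omega
        rw [herase] at hstep
        have : t' ≤ t := by rw [ht']; omega
        omega
      have hBcons : ∀ j, ∀ i ∈ Bf j, ∀ i' ∈ Bf j, i < i' → i ∈ Bf i' := by
        intro j i hi i' hi' hlt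
        rw [hBmem] at hi hi' ⊢
        refine ⟨hlt, ?_⟩
        have hne' : (↑(ι i) : Fin N) ≠ ↑(ι i') := ne_of_lt (hmono i i' hlt)
        exact P4 _ _ (hmemSfn i j hi.1 hi.2) _ (hmemSfn i' j hi'.1 hi'.2) hne'
      obtain ⟨H'', hH''tree, hH''edge⟩ :=
        KTC.completion (m := m) (t := t) Bf (by omega)
          (fun j i hi => ((hBmem i j).1 hi).1) hBcard hBcons
      have hKT : IsKTree t (H''.comap ψ) := isKTree_comap t H'' hH''tree ψ
      refine Nat.sInf_le ⟨H''.comap ψ, hKT, ?_⟩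
      intro a b hab
      have hab' : G.Adj ↑a ↑b := hab
      have hH2ab : H₂.Adj (e ↑a) (e ↑b) := by
        show H.Adj (e.symm (e ↑a)) (e.symm (e ↑b))
        rw [e.symm_apply_apply, e.symm_apply_apply]
        exact hGH hab'
      have hab2 : H₂.Adj ↑(ι (ψ a)) ↑(ι (ψ b)) := by
        rw [hψι a, hψι b]; exact hH2ab
      have hne : ψ a ≠ ψ b := by
        intro hcon
        have hcoe : (↑(ι (ψ a)) : Fin N) = ↑(ι (ψ b)) := by rw [hcon]
        rw [hψι a, hψι b] at hcoe
        exact hH2ab.ne hcoe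
      show H''.Adj (ψ a) (ψ b)
      rcases lt_or_gt_of_ne hne with hlt | hlt
      · exact hH''edge _ _ hlt ((hBmem _ _).2 ⟨hlt, hab2⟩)
      · exact (hH''edge _ _ hlt ((hBmem _ _).2 ⟨hlt, hab2.symm⟩)).symm
  · -- cardinality
    rw [hScard, hcardN]
    by_cases hε1 : 1 ≤ ε
    · have h1 : (1 - ε) ≤ 0 := by linarith
      have h2 : 0 ≤ (t + 1 : ℝ) * (N : ℝ) / (k + 1) := by positivity
      have h3 : (1 - ε) * ((t + 1 : ℝ) * (N : ℝ) / (k + 1)) ≤ 0 :=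
        mul_nonpos_of_nonpos_of_nonneg h1 h2
      exact h3.trans (Nat.cast_nonneg _)
    · push_neg at hε1
      have hb_real : (Bad.card : ℝ) ≤ ε * N := by
        have hF4 : (2 * k : ℝ) ≤ ε * d := by
          have hle := Nat.le_ceil ((2 * (k : ℝ)) / ε)
          rw [← hd] at hle
          calc (2 * (k : ℝ)) = (2 * (k : ℝ)) / ε * ε := by field_simp
          _ ≤ (d : ℝ) * ε := mul_le_mul_of_nonneg_right hle (le_of_lt hε)
          _ = ε * d := by ring
        have hF1 : ((d : ℝ) + 1) * Bad.card ≤ 2 * k * N := by exact_mod_cast hBadcard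
        have hd1 : (0 : ℝ) < (d : ℝ) + 1 := by positivity
        rw [← mul_le_mul_iff_right₀ hd1]
        calc ((d : ℝ) + 1) * Bad.card ≤ 2 * k * N := hF1
        _ ≤ ((d : ℝ) + 1) * (ε * N) := by nlinarith [Nat.cast_nonneg (α := ℝ) N, hε.le]
      have hg_real : ((1 - ε) * N : ℝ) ≤ Good.card := by
        have hgb : (Good.card : ℝ) + Bad.card = N := by exact_mod_cast hGoodBad
        nlinarith
      have hF3 : ((t' : ℝ) + 1) * Good.card ≤ ((q : ℝ) + 1) * W.card := by
        have hnat : (t' + 1) * Good.card ≤ (q + 1) * W.card := by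
          calc (t' + 1) * Good.card = (t' + 1) * ∑ col, cnt col := by rw [hcntsum]
          _ ≤ (q + 1) * ∑ col ∈ Cs, cnt col := by simpa using hCsum
          _ = (q + 1) * W.card := by rw [hWcard]
        exact_mod_cast hnat
      have hF5 : ((t : ℝ) + 1) * ((q : ℝ) + 1) ≤ ((t' : ℝ) + 1) * ((k : ℝ) + 1) := by
        have hnat : (t + 1) * (q + 1) ≤ (t' + 1) * (k + 1) := by
          rcases le_total t q with h | h
          · have ht'' : t' = t := by rw [ht']; omega
            rw [ht'']
            exact Nat.mul_le_mul_left _ (by omega)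
          · have ht'' : t' = q := by rw [ht']; omega
            rw [ht'']
            calc (t + 1) * (q + 1) = (q + 1) * (t + 1) := by ring
            _ ≤ (q + 1) * (k + 1) := Nat.mul_le_mul_left _ (by omega)
        exact_mod_cast hnat
      have hk1 : (0 : ℝ) < (k : ℝ) + 1 := by positivity
      have hq1 : (0 : ℝ) < (q : ℝ) + 1 := by positivity
      have key : ((1 - ε) * (((t : ℝ) + 1) * N)) * ((q : ℝ) + 1)
          ≤ ((W.card : ℝ) * ((k : ℝ) + 1)) * ((q : ℝ) + 1) := by
        calc ((1 - ε) * (((t : ℝ) + 1) * N)) * ((q : ℝ) + 1)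
            = ((1 - ε) * N) * (((t : ℝ) + 1) * ((q : ℝ) + 1)) := by ring
        _ ≤ (Good.card : ℝ) * (((t' : ℝ) + 1) * ((k : ℝ) + 1)) := by
            apply mul_le_mul hg_real hF5 (by positivity) (Nat.cast_nonneg _)
        _ = (((t' : ℝ) + 1) * Good.card) * ((k : ℝ) + 1) := by ring
        _ ≤ (((q : ℝ) + 1) * W.card) * ((k : ℝ) + 1) :=
            mul_le_mul_of_nonneg_right hF3 hk1.le
        _ = ((W.card : ℝ) * ((k : ℝ) + 1)) * ((q : ℝ) + 1) := by ring
      have key2 : (1 - ε) * (((t : ℝ) + 1) * N) ≤ (W.card : ℝ) * ((k : ℝ) + 1) :=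
        le_of_mul_le_mul_right key hq1
      have hgoal : (1 - ε) * ((t + 1 : ℝ) * (N : ℝ) / (k + 1))
          = ((1 - ε) * (((t : ℝ) + 1) * N)) / ((k : ℝ) + 1) := by ring
      rw [hgoal, div_le_iff₀ hk1]
      exact key2

end part4
end
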